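/- arXiv:1803.06537 — 5 statements merged into one kernel-verified Lean document; each statement's English description precedes it below -/
import Mathlib

section
/- Let p ≥ 1 linear maps f_i on ℝ^D and suppose there exist subspaces V, W ⊆ ℝ^D with V ⊕ W = ℝ^D such that for all i: (i) (f_i − Id)(V) ⊆ W; (ii) f_i(W) ⊆ W and the induced map f_{i,W} : W → W is a contraction. Then for every nonempty compact K_0 ⊆ ℝ^D, the sequence (H^n(K_0))_n converges in the Hausdorff metric to L = cl(⋃_{v_0 ∈ p_{V,W}(K_0)} (v_0 + L̃(v_0))), where p_{V,W} is the projection onto V along W and L̃(v_0) ⊆ W is the attractor of the contractive IFS {f̃_1,…,f̃_p} on W defined by f̃_i(w) = f_{i,W}(w) + (f_i − Id)(v_0). In particular, p_{V,W}(L) = p_{V,W}(K_0). -/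
open Metric Filter Pointwise Topology

set_option maxHeartbeats 2000000

noncomputable section

/-- The Hutchinson operator `H(K) = ⋃ i, f i '' K`. -/
def hutch {D p : ℕ} (f : Fin (p + 1) → EuclideanSpace ℝ (Fin D) → EuclideanSpace ℝ (Fin D))
    (K : Set (EuclideanSpace ℝ (Fin D))) : Set (EuclideanSpace ℝ (Fin D)) := ⋃ i, f i '' K

/-- The projection onto `V` along `W` for complementary subspaces `V ⊕ W = ℝ^D`. -/
def projVW {D : ℕ} (V W : Submodule ℝ (EuclideanSpace ℝ (Fin D))) (h : IsCompl V W) :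
    EuclideanSpace ℝ (Fin D) →ₗ[ℝ] EuclideanSpace ℝ (Fin D) :=
  V.subtype ∘ₗ Submodule.linearProjOfIsCompl V W h

lemma hutch_iUnion {D p : ℕ} (f : Fin (p + 1) → EuclideanSpace ℝ (Fin D) → EuclideanSpace ℝ (Fin D))
    {ι : Sort*} (s : ι → Set (EuclideanSpace ℝ (Fin D))) :
    hutch f (⋃ j, s j) = ⋃ j, hutch f (s j) := by
  simp only [hutch, Set.image_iUnion]
  exact Set.iUnion_comm _

lemma hutch_iterate_iUnion {D p : ℕ}
    (f : Fin (p + 1) → EuclideanSpace ℝ (Fin D) → EuclideanSpace ℝ (Fin D))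
    {ι : Sort*} (n : ℕ) (s : ι → Set (EuclideanSpace ℝ (Fin D))) :
    (hutch f)^[n] (⋃ j, s j) = ⋃ j, (hutch f)^[n] (s j) := by
  induction n generalizing s with
  | zero => simp
  | succ n ih =>
    rw [Function.iterate_succ_apply, hutch_iUnion]
    exact ih _

/-- Theorem `theo:linsup`. Suppose `ℝ^D = V ⊕ W`, `(f_i − Id)(V) ⊆ W`, each
`f_i` preserves `W` and the induced maps on `W` are contractions. Then `(H^n(K₀))_n` converges
for every nonempty compact `K₀` to `L = cl(⋃_{v₀ ∈ p_{V,W}(K₀)} (v₀ + L̃(v₀)))` where `L̃(v₀)`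
is the attractor of the contractive IFS `{w ↦ f_{i,W}(w) + (f_i − Id)(v₀)}` on `W`; in
particular `p_{V,W}(L) = p_{V,W}(K₀)`. -/
theorem stmt13 {D p : ℕ}
    (A : Fin (p + 1) → EuclideanSpace ℝ (Fin D) →L[ℝ] EuclideanSpace ℝ (Fin D))
    (f : Fin (p + 1) → EuclideanSpace ℝ (Fin D) → EuclideanSpace ℝ (Fin D))
    (hf : ∀ i x, f i x = A i x)
    (V W : Submodule ℝ (EuclideanSpace ℝ (Fin D))) (hVW : IsCompl V W)
    (hV : ∀ i, ∀ v ∈ V, A i v - v ∈ W)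
    (hW : ∀ i, (∀ w ∈ W, A i w ∈ W) ∧
      (∃ c : ℝ, 0 ≤ c ∧ c < 1 ∧ ∀ w ∈ W, ‖A i w‖ ≤ c * ‖w‖))
    (K₀ : Set (EuclideanSpace ℝ (Fin D))) (hK₀c : IsCompact K₀) (hK₀ne : K₀.Nonempty) :
    ∃ Lt : EuclideanSpace ℝ (Fin D) → Set (EuclideanSpace ℝ (Fin D)),
      (∀ v₀ ∈ projVW V W hVW '' K₀,
        Lt v₀ ⊆ (W : Set (EuclideanSpace ℝ (Fin D))) ∧ IsCompact (Lt v₀) ∧ (Lt v₀).Nonempty ∧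
        (⋃ i, (fun w => A i w + (A i v₀ - v₀)) '' Lt v₀) = Lt v₀) ∧
      Tendsto (fun n => hausdorffDist ((hutch f)^[n] K₀)
        (closure (⋃ v₀ ∈ projVW V W hVW '' K₀, (fun w => v₀ + w) '' Lt v₀))) atTop (𝓝 0) ∧
      projVW V W hVW ''
          closure (⋃ v₀ ∈ projVW V W hVW '' K₀, (fun w => v₀ + w) '' Lt v₀) =
        projVW V W hVW '' K₀ := by
  classical
  set pr : EuclideanSpace ℝ (Fin D) →ₗ[ℝ] EuclideanSpace ℝ (Fin D) := projVW V W hVW with hpr_def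
  -- basic facts about the projection
  have hprV : ∀ v ∈ V, pr v = v := by
    intro v hv
    exact congrArg Subtype.val (Submodule.projectionOnto_apply_of_mem_left hVW hv)
  have hprW : ∀ w ∈ W, pr w = 0 := by
    intro w hw
    exact congrArg Subtype.val (Submodule.projectionOnto_apply_of_mem_right hVW hw)
  have hmemV : ∀ x : EuclideanSpace ℝ (Fin D), pr x ∈ V := fun x => (V.linearProjOfIsCompl W hVW x).2
  have hsubW : ∀ x : EuclideanSpace ℝ (Fin D), x - pr x ∈ W := by
    intro x
    have h := Submodule.projection_add_projection_eq_self hVW x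
    have hpreq : pr x = (V.linearProjOfIsCompl W hVW x : EuclideanSpace ℝ (Fin D)) := rfl
    have h2 : (W.linearProjOfIsCompl V hVW.symm x : EuclideanSpace ℝ (Fin D)) = x - pr x := by
      rw [hpreq]
      exact eq_sub_of_add_eq (by rw [add_comm]; exact h)
    rw [← h2]; exact (W.linearProjOfIsCompl V hVW.symm x).2
  have hidem : ∀ x : EuclideanSpace ℝ (Fin D), pr (pr x) = pr x := fun x => hprV _ (hmemV x)
  -- the contraction constant
  have hne : (Finset.univ : Finset (Fin (p+1))).Nonempty := Finset.univ_nonempty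
  set cf : Fin (p+1) → ℝ := fun i => (hW i).2.choose with hcf_def
  have hcf : ∀ i, 0 ≤ cf i ∧ cf i < 1 ∧ ∀ w ∈ W, ‖A i w‖ ≤ cf i * ‖w‖ :=
    fun i => (hW i).2.choose_spec
  set c : ℝ := Finset.univ.sup' hne cf with hc_def
  have hc0 : 0 ≤ c := le_trans (hcf 0).1 (Finset.le_sup' cf (Finset.mem_univ 0))
  have hc1 : c < 1 := by
    rw [hc_def, Finset.sup'_lt_iff]
    exact fun i _ => (hcf i).2.1
  have hc : ∀ i, ∀ w ∈ W, ‖A i w‖ ≤ c * ‖w‖ := by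
    intro i w hw
    exact le_trans ((hcf i).2.2 w hw)
      (mul_le_mul_of_nonneg_right (Finset.le_sup' cf (Finset.mem_univ i)) (norm_nonneg _))
  set cK : NNReal := ⟨c, hc0⟩ with hcK_def
  -- the parameterized IFS on W
  have hgmem : ∀ (v : EuclideanSpace ℝ (Fin D)) (i : Fin (p+1)) (w : ↥W), A i (w : EuclideanSpace ℝ (Fin D)) + (A i (pr v) - pr v) ∈ W :=
    fun v i w => W.add_mem ((hW i).1 _ w.2) (hV i _ (hmemV v))
  set g : EuclideanSpace ℝ (Fin D) → Fin (p+1) → ↥W → ↥W := fun v i w => ⟨A i (w : EuclideanSpace ℝ (Fin D)) + (A i (pr v) - pr v), hgmem v i w⟩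
    with hg_def
  have hglip : ∀ v i, LipschitzWith cK (g v i) := by
    intro v i
    apply LipschitzWith.of_dist_le_mul
    intro w w'
    rw [Subtype.dist_eq]
    show dist (A i (w:EuclideanSpace ℝ (Fin D)) + (A i (pr v) - pr v)) (A i (w':EuclideanSpace ℝ (Fin D)) + (A i (pr v) - pr v)) ≤ _
    rw [dist_add_right, dist_eq_norm, ← map_sub, Subtype.dist_eq, dist_eq_norm]
    exact hc i _ (W.sub_mem w.2 w'.2)
  -- the Hutchinson operator on nonempty compacts of W
  set T : EuclideanSpace ℝ (Fin D) → TopologicalSpace.NonemptyCompacts ↥W → TopologicalSpace.NonemptyCompacts ↥W :=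
    fun v K => ⟨⟨⋃ i, g v i '' (K : Set ↥W),
      isCompact_iUnion fun i => K.isCompact.image (hglip v i).continuous⟩,
      ⟨g v 0 K.nonempty.choose, Set.mem_iUnion.2 ⟨0, Set.mem_image_of_mem _ K.nonempty.choose_spec⟩⟩⟩
    with hT_def
  have hTcoe : ∀ v K, ((T v K : Set ↥W)) = ⋃ i, g v i '' (K : Set ↥W) := fun v K => rfl
  have hedist_ne_top : ∀ (s t : TopologicalSpace.NonemptyCompacts ↥W),
      EMetric.hausdorffEdist (s : Set ↥W) (t : Set ↥W) ≠ ⊤ := fun s t =>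
    hausdorffEdist_ne_top_of_nonempty_of_bounded s.nonempty t.nonempty
      s.isCompact.isBounded t.isCompact.isBounded
  -- T v is a contraction
  have hT : ∀ v, ContractingWith cK (T v) := by
    intro v
    constructor
    · exact_mod_cast hc1
    · apply LipschitzWith.of_dist_le_mul
      intro K K'
      rw [NonemptyCompacts.dist_eq, NonemptyCompacts.dist_eq]
      have hd0 : (0:ℝ) ≤ (cK : ℝ) * hausdorffDist (K : Set ↥W) (K' : Set ↥W) :=
        mul_nonneg hc0 hausdorffDist_nonneg
      apply hausdorffDist_le_of_mem_dist hd0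
      · intro x hx
        rw [hTcoe] at hx
        obtain ⟨i, hxi⟩ := Set.mem_iUnion.1 hx
        obtain ⟨a, ha, rfl⟩ := hxi
        obtain ⟨b, hb, hab⟩ := K'.isCompact.exists_infDist_eq_dist K'.nonempty a
        refine ⟨g v i b, by rw [hTcoe]; exact Set.mem_iUnion.2 ⟨i, Set.mem_image_of_mem _ hb⟩, ?_⟩
        calc dist (g v i a) (g v i b) ≤ (cK:ℝ) * dist a b := (hglip v i).dist_le_mul a b
          _ ≤ (cK:ℝ) * hausdorffDist (K : Set ↥W) (K' : Set ↥W) := by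
              apply mul_le_mul_of_nonneg_left _ hc0
              rw [← hab]
              exact infDist_le_hausdorffDist_of_mem ha (hedist_ne_top K K')
      · intro x hx
        rw [hTcoe] at hx
        obtain ⟨i, hxi⟩ := Set.mem_iUnion.1 hx
        obtain ⟨a, ha, rfl⟩ := hxi
        obtain ⟨b, hb, hab⟩ := K.isCompact.exists_infDist_eq_dist K.nonempty a
        refine ⟨g v i b, by rw [hTcoe]; exact Set.mem_iUnion.2 ⟨i, Set.mem_image_of_mem _ hb⟩, ?_⟩
        calc dist (g v i a) (g v i b) ≤ (cK:ℝ) * dist a b := (hglip v i).dist_le_mul a b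
          _ ≤ (cK:ℝ) * hausdorffDist (K : Set ↥W) (K' : Set ↥W) := by
              apply mul_le_mul_of_nonneg_left _ hc0
              rw [← hab]
              rw [hausdorffDist_comm]
              exact infDist_le_hausdorffDist_of_mem ha (hedist_ne_top K' K)
  -- the attractor
  set Att : EuclideanSpace ℝ (Fin D) → TopologicalSpace.NonemptyCompacts ↥W :=
    fun v => ContractingWith.fixedPoint (T v) (hT v) with hAtt_def
  have hfix : ∀ v, T v (Att v) = Att v := fun v => (hT v).fixedPoint_isFixedPt
  set Lt : EuclideanSpace ℝ (Fin D) → Set (EuclideanSpace ℝ (Fin D)) := fun v => Subtype.val '' ((Att (pr v)) : Set ↥W) with hLt_def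
  have hLtpr : ∀ x : EuclideanSpace ℝ (Fin D), Lt (pr x) = Subtype.val '' ((Att (pr x)) : Set ↥W) := by
    intro x
    show Subtype.val '' ((Att (pr (pr x))) : Set ↥W) = _
    rw [hidem]
  -- translation+inclusion isometries
  have hiso : ∀ v : EuclideanSpace ℝ (Fin D), Isometry ((fun y => v + y) ∘ (Subtype.val : ↥W → EuclideanSpace ℝ (Fin D))) :=
    fun v => (Isometry.of_dist_eq fun a b => dist_add_left v a b).comp (fun a b => rfl)
  have himg : ∀ (v : EuclideanSpace ℝ (Fin D)) (S : Set ↥W), (fun y => v + y) '' (Subtype.val '' S)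
      = ((fun y => v + y) ∘ (Subtype.val : ↥W → EuclideanSpace ℝ (Fin D))) '' S := fun v S => (Set.image_comp _ _ S).symm
  have hdist_img : ∀ (v : EuclideanSpace ℝ (Fin D)) (K K' : TopologicalSpace.NonemptyCompacts ↥W),
      hausdorffDist ((fun y => v + y) '' (Subtype.val '' (K : Set ↥W)))
        ((fun y => v + y) '' (Subtype.val '' (K' : Set ↥W))) = dist K K' := by
    intro v K K'
    rw [himg, himg, hausdorffDist_image (hiso v), NonemptyCompacts.dist_eq]
  -- conjugation of the dynamics
  have hconj : ∀ (v : EuclideanSpace ℝ (Fin D)), v ∈ V → ∀ i : Fin (p+1),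
      (f i) ∘ ((fun y => v + y) ∘ (Subtype.val : ↥W → EuclideanSpace ℝ (Fin D)))
        = ((fun y => v + y) ∘ (Subtype.val : ↥W → EuclideanSpace ℝ (Fin D))) ∘ g v i := by
    intro v hv i
    funext w
    simp only [Function.comp_apply, hf]
    show A i (v + (w:EuclideanSpace ℝ (Fin D))) = v + (A i (w:EuclideanSpace ℝ (Fin D)) + (A i (pr v) - pr v))
    rw [hprV v hv, map_add]
    abel
  have hkey : ∀ (v : EuclideanSpace ℝ (Fin D)), v ∈ V → ∀ K : TopologicalSpace.NonemptyCompacts ↥W,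
      hutch f ((fun y => v + y) '' (Subtype.val '' (K : Set ↥W)))
        = (fun y => v + y) '' (Subtype.val '' ((T v K : Set ↥W))) := by
    intro v hv K
    have hfun : ∀ (i : Fin (p+1)) (w : ↥W),
        f i (v + (w : EuclideanSpace ℝ (Fin D))) = v + ((g v i w : ↥W) : EuclideanSpace ℝ (Fin D)) := by
      intro i w
      rw [hf]
      show A i (v + (w : EuclideanSpace ℝ (Fin D)))
        = v + (A i (w : EuclideanSpace ℝ (Fin D)) + (A i (pr v) - pr v))
      rw [hprV v hv, map_add]
      abel
    ext y
    constructor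
    · intro hy
      obtain ⟨i, hyi⟩ := Set.mem_iUnion.1 hy
      obtain ⟨z, hz, rfl⟩ := hyi
      obtain ⟨u, hu, rfl⟩ := hz
      obtain ⟨w, hwK, rfl⟩ := hu
      exact ⟨(g v i w : ↥W), ⟨g v i w,
        Set.mem_iUnion.2 ⟨i, Set.mem_image_of_mem _ hwK⟩, rfl⟩, (hfun i w).symm⟩
    · intro hy
      obtain ⟨u, hu, rfl⟩ := hy
      obtain ⟨w, hw, rfl⟩ := hu
      obtain ⟨i, hwi⟩ := Set.mem_iUnion.1 hw
      obtain ⟨a, haK, rfl⟩ := hwi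
      exact Set.mem_iUnion.2 ⟨i, ⟨v + (a : EuclideanSpace ℝ (Fin D)),
        ⟨(a : EuclideanSpace ℝ (Fin D)), ⟨a, haK, rfl⟩, rfl⟩, hfun i a⟩⟩
  have hiterate : ∀ (n : ℕ) (v : EuclideanSpace ℝ (Fin D)), v ∈ V → ∀ K : TopologicalSpace.NonemptyCompacts ↥W,
      (hutch f)^[n] ((fun y => v + y) '' (Subtype.val '' (K : Set ↥W)))
        = (fun y => v + y) '' (Subtype.val '' (((T v)^[n] K : Set ↥W))) := by
    intro n
    induction n with
    | zero => intro v hv K; simp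
    | succ n ih =>
      intro v hv K
      rw [Function.iterate_succ_apply, hkey v hv K, ih v hv (T v K),
        Function.iterate_succ_apply]
  -- per-point initial data
  set wpt : EuclideanSpace ℝ (Fin D) → ↥W := fun x => ⟨x - pr x, hsubW x⟩ with hwpt_def
  set Kpt : EuclideanSpace ℝ (Fin D) → TopologicalSpace.NonemptyCompacts ↥W :=
    fun x => ⟨⟨{wpt x}, isCompact_singleton⟩, Set.singleton_nonempty _⟩ with hKpt_def
  have hKptcoe : ∀ x, ((Kpt x : Set ↥W)) = {wpt x} := fun x => rfl
  have hsingleton : ∀ x : EuclideanSpace ℝ (Fin D),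
      ({x} : Set (EuclideanSpace ℝ (Fin D))) = (fun y => pr x + y) '' (Subtype.val '' (Kpt x : Set ↥W)) := by
    intro x
    rw [hKptcoe]
    simp only [Set.image_singleton]
    congr 1
    show x = pr x + (x - pr x)
    abel
  have hpoint : ∀ (x : EuclideanSpace ℝ (Fin D)) (n : ℕ), (hutch f)^[n] ({x} : Set (EuclideanSpace ℝ (Fin D)))
      = (fun y => pr x + y) '' (Subtype.val '' (((T (pr x))^[n] (Kpt x) : Set ↥W))) := by
    intro x n
    rw [hsingleton x]
    exact hiterate n (pr x) (hmemV x) (Kpt x)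
  -- iterate distance estimate
  have hiterdist : ∀ (v : EuclideanSpace ℝ (Fin D)) (K : TopologicalSpace.NonemptyCompacts ↥W) (n : ℕ),
      dist ((T v)^[n] K) (Att v) ≤ c ^ n * dist K (Att v) := by
    intro v K n
    have h1 := ((hT v).toLipschitzWith.iterate n).dist_le_mul K (Att v)
    have h2 : (T v)^[n] (Att v) = Att v := ((hT v).fixedPoint_isFixedPt).iterate n
    rw [h2] at h1
    calc dist ((T v)^[n] K) (Att v) ≤ ((cK ^ n : NNReal) : ℝ) * dist K (Att v) := h1
      _ = c ^ n * dist K (Att v) := by rw [NNReal.coe_pow]; rfl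
  -- uniform bound M
  obtain ⟨R₀, hR₀⟩ := hK₀c.isBounded.exists_norm_le
  set R : ℝ := max R₀ 0 with hR_def
  have hR0 : (0:ℝ) ≤ R := le_max_right _ _
  have hR : ∀ x ∈ K₀, ‖x‖ ≤ R := fun x hx => le_trans (hR₀ x hx) (le_max_left _ _)
  set prc := LinearMap.toContinuousLinearMap pr with hprc_def
  have hprcoe : ⇑prc = ⇑pr := LinearMap.coe_toContinuousLinearMap' pr
  set P : ℝ := ‖prc‖ with hP_def
  have hP0 : (0:ℝ) ≤ P := norm_nonneg _
  have hprc : ∀ x : EuclideanSpace ℝ (Fin D), ‖pr x‖ ≤ P * ‖x‖ := by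
    intro x
    have := prc.le_opNorm x
    rwa [hprcoe] at this
  set CA : ℝ := Finset.univ.sup' hne (fun i => ‖A i‖ + 1) with hCA_def
  have hCA : ∀ (i : Fin (p+1)) (v : EuclideanSpace ℝ (Fin D)), ‖A i v - v‖ ≤ CA * ‖v‖ := by
    intro i v
    calc ‖A i v - v‖ ≤ ‖A i v‖ + ‖v‖ := norm_sub_le _ _
      _ ≤ ‖A i‖ * ‖v‖ + ‖v‖ := add_le_add_left ((A i).le_opNorm v) _
      _ = (‖A i‖ + 1) * ‖v‖ := by ring
      _ ≤ CA * ‖v‖ := mul_le_mul_of_nonneg_right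
          (Finset.le_sup' (fun i => ‖A i‖ + 1) (Finset.mem_univ i)) (norm_nonneg _)
  have hCA0 : (0:ℝ) ≤ CA :=
    le_trans (by positivity) (Finset.le_sup' (fun i => ‖A i‖ + 1) (Finset.mem_univ 0))
  have h1c : (0:ℝ) < 1 - c := by linarith
  set M : ℝ := (R + P * R) + (CA * (P * R)) / (1 - c) with hM_def
  have hM0 : (0:ℝ) ≤ M :=
    add_nonneg (add_nonneg hR0 (mul_nonneg hP0 hR0))
      (div_nonneg (mul_nonneg hCA0 (mul_nonneg hP0 hR0)) h1c.le)
  -- the zero singleton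
  set Z : TopologicalSpace.NonemptyCompacts ↥W :=
    ⟨⟨{0}, isCompact_singleton⟩, Set.singleton_nonempty _⟩ with hZ_def
  have hZcoe : (Z : Set ↥W) = {0} := rfl
  have hsingdist : ∀ a b : ↥W, hausdorffDist ({a} : Set ↥W) ({b} : Set ↥W) ≤ dist a b := by
    intro a b
    apply hausdorffDist_le_of_mem_dist dist_nonneg
    · intro y hy
      rw [Set.mem_singleton_iff] at hy
      exact ⟨b, rfl, le_of_eq (by rw [hy])⟩
    · intro y hy
      rw [Set.mem_singleton_iff] at hy
      exact ⟨a, rfl, le_of_eq (by rw [hy, dist_comm])⟩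
  have hgz : ∀ (v : EuclideanSpace ℝ (Fin D)) (i : Fin (p+1)), ((g v i 0 : ↥W) : EuclideanSpace ℝ (Fin D)) = A i (pr v) - pr v := by
    intro v i
    show A i ((0 : ↥W) : EuclideanSpace ℝ (Fin D)) + (A i (pr v) - pr v) = A i (pr v) - pr v
    rw [ZeroMemClass.coe_zero, map_zero, zero_add]
  have hMbound : ∀ x ∈ K₀, dist (Kpt x) (Att (pr x)) ≤ M := by
    intro x hx
    have hb1 : dist (Kpt x) Z ≤ R + P * R := by
      rw [NonemptyCompacts.dist_eq, hKptcoe, hZcoe]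
      refine le_trans (hsingdist _ _) ?_
      have : dist (wpt x) (0 : ↥W) = ‖x - pr x‖ := by
        rw [Subtype.dist_eq]
        show dist (x - pr x) ((0:↥W):EuclideanSpace ℝ (Fin D)) = _
        rw [ZeroMemClass.coe_zero, dist_zero_right]
      rw [this]
      calc ‖x - pr x‖ ≤ ‖x‖ + ‖pr x‖ := norm_sub_le _ _
        _ ≤ R + P * R := add_le_add (hR x hx)
            (le_trans (hprc x) (mul_le_mul_of_nonneg_left (hR x hx) hP0))
    have hgbound : ∀ i : Fin (p+1), ‖((g (pr x) i 0 : ↥W) : EuclideanSpace ℝ (Fin D))‖ ≤ CA * (P * R) := by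
      intro i
      rw [hgz, hidem]
      calc ‖A i (pr x) - pr x‖ ≤ CA * ‖pr x‖ := hCA i (pr x)
        _ ≤ CA * (P * R) := mul_le_mul_of_nonneg_left
            (le_trans (hprc x) (mul_le_mul_of_nonneg_left (hR x hx) hP0)) hCA0
    have hb2 : dist Z (Att (pr x)) ≤ (CA * (P * R)) / (1 - c) := by
      refine le_trans ((hT (pr x)).dist_fixedPoint_le Z) ?_
      have hnum : dist Z (T (pr x) Z) ≤ CA * (P * R) := by
        rw [NonemptyCompacts.dist_eq, hZcoe, hTcoe, hZcoe]
        apply hausdorffDist_le_of_mem_dist (mul_nonneg hCA0 (mul_nonneg hP0 hR0))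
        · intro y hy
          rw [Set.mem_singleton_iff] at hy; subst hy
          refine ⟨g (pr x) 0 0, Set.mem_iUnion.2 ⟨0, Set.mem_image_of_mem _ rfl⟩, ?_⟩
          rw [dist_comm, Subtype.dist_eq, ZeroMemClass.coe_zero, dist_zero_right]
          exact hgbound 0
        · intro y hy
          obtain ⟨i, hyi⟩ := Set.mem_iUnion.1 hy
          obtain ⟨a, ha, rfl⟩ := hyi
          rw [Set.mem_singleton_iff] at ha; subst ha
          refine ⟨0, rfl, ?_⟩
          rw [Subtype.dist_eq, ZeroMemClass.coe_zero, dist_zero_right]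
          exact hgbound i
      have hck : (cK : ℝ) = c := rfl
      rw [hck]
      gcongr
    calc dist (Kpt x) (Att (pr x)) ≤ dist (Kpt x) Z + dist Z (Att (pr x)) := dist_triangle _ _ _
      _ ≤ (R + P * R) + (CA * (P * R)) / (1 - c) := add_le_add hb1 hb2
      _ = M := by rw [hM_def]
  -- per-point Hausdorff estimate
  have hpointdist : ∀ x ∈ K₀, ∀ n : ℕ, hausdorffDist ((hutch f)^[n] ({x} : Set (EuclideanSpace ℝ (Fin D))))
      ((fun y => pr x + y) '' (Subtype.val '' ((Att (pr x)) : Set ↥W))) ≤ c ^ n * M := by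
    intro x hx n
    rw [hpoint x n, hdist_img]
    calc dist ((T (pr x))^[n] (Kpt x)) (Att (pr x))
        ≤ c ^ n * dist (Kpt x) (Att (pr x)) := hiterdist _ _ n
      _ ≤ c ^ n * M := mul_le_mul_of_nonneg_left (hMbound x hx) (pow_nonneg hc0 n)
  have hbig : ∀ n : ℕ, (hutch f)^[n] K₀ = ⋃ x : K₀, (hutch f)^[n] {(x : EuclideanSpace ℝ (Fin D))} := by
    intro n
    conv_lhs => rw [← Set.iUnion_of_singleton_coe K₀]
    exact hutch_iterate_iUnion f n _
  -- the limit set (before closure)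
  set SS : Set (EuclideanSpace ℝ (Fin D)) :=
    ⋃ v₀ ∈ pr '' K₀, (fun w => v₀ + w) '' Lt v₀ with hSS_def
  -- compactness/nonemptiness of the pieces
  have hTsetc : ∀ x : EuclideanSpace ℝ (Fin D),
      IsCompact ((fun y => pr x + y) '' (Subtype.val '' ((Att (pr x)) : Set ↥W))) := by
    intro x
    exact (((Att (pr x)).isCompact.image continuous_subtype_val).image
      (continuous_const.add continuous_id))
  have hTsetne : ∀ x : EuclideanSpace ℝ (Fin D),
      ((fun y => pr x + y) '' (Subtype.val '' ((Att (pr x)) : Set ↥W))).Nonempty :=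
    fun x => ((Att (pr x)).nonempty.image _).image _
  have hHsetc : ∀ (x : EuclideanSpace ℝ (Fin D)) (n : ℕ),
      IsCompact ((hutch f)^[n] ({x} : Set (EuclideanSpace ℝ (Fin D)))) := by
    intro x n
    rw [hpoint x n]
    exact ((((T (pr x))^[n] (Kpt x)).isCompact.image continuous_subtype_val).image
      (continuous_const.add continuous_id))
  have hHsetne : ∀ (x : EuclideanSpace ℝ (Fin D)) (n : ℕ),
      ((hutch f)^[n] ({x} : Set (EuclideanSpace ℝ (Fin D)))).Nonempty := by
    intro x n
    rw [hpoint x n]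
    exact ((((T (pr x))^[n] (Kpt x)).nonempty.image _).image _)
  have hLtmem : ∀ x ∈ K₀,
      (fun y => pr x + y) '' (Subtype.val '' ((Att (pr x)) : Set ↥W)) ⊆ SS := by
    intro x hx
    rw [hSS_def, ← hLtpr x]
    intro z hz
    exact Set.mem_biUnion (Set.mem_image_of_mem pr hx) hz
  -- main Hausdorff estimate
  have hmain : ∀ n : ℕ, hausdorffDist ((hutch f)^[n] K₀) SS ≤ c ^ n * M := by
    intro n
    apply hausdorffDist_le_of_mem_dist (mul_nonneg (pow_nonneg hc0 n) hM0)
    · intro y hy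
      rw [hbig n] at hy
      obtain ⟨x, hyx⟩ := Set.mem_iUnion.1 hy
      have hne' : EMetric.hausdorffEdist ((hutch f)^[n] ({(x:EuclideanSpace ℝ (Fin D))} : Set (EuclideanSpace ℝ (Fin D))))
          ((fun y => pr x + y) '' (Subtype.val '' ((Att (pr (x:EuclideanSpace ℝ (Fin D)))) : Set ↥W))) ≠ ⊤ :=
        hausdorffEdist_ne_top_of_nonempty_of_bounded (hHsetne x n) (hTsetne x)
          (hHsetc x n).isBounded (hTsetc x).isBounded
      have h1 : infDist y ((fun y => pr (x:EuclideanSpace ℝ (Fin D)) + y) '' (Subtype.val '' ((Att (pr (x:EuclideanSpace ℝ (Fin D)))) : Set ↥W))) ≤ c ^ n * M :=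
        le_trans (infDist_le_hausdorffDist_of_mem hyx hne') (hpointdist x x.2 n)
      obtain ⟨z, hz, hzd⟩ := (hTsetc (x:EuclideanSpace ℝ (Fin D))).exists_infDist_eq_dist (hTsetne x) y
      exact ⟨z, hLtmem x x.2 hz, by rw [← hzd]; exact h1⟩
    · intro y hy
      rw [hSS_def] at hy
      obtain ⟨v₀, hv₀, hyv⟩ := Set.mem_iUnion₂.1 hy
      obtain ⟨x, hx, rfl⟩ := hv₀
      rw [hLtpr x] at hyv
      have hne' : EMetric.hausdorffEdist
          ((fun y => pr x + y) '' (Subtype.val '' ((Att (pr x)) : Set ↥W)))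
          ((hutch f)^[n] ({x} : Set (EuclideanSpace ℝ (Fin D)))) ≠ ⊤ :=
        hausdorffEdist_ne_top_of_nonempty_of_bounded (hTsetne x) (hHsetne x n)
          (hTsetc x).isBounded (hHsetc x n).isBounded
      have h1 : infDist y ((hutch f)^[n] ({x} : Set (EuclideanSpace ℝ (Fin D)))) ≤ c ^ n * M := by
        refine le_trans (infDist_le_hausdorffDist_of_mem hyv hne') ?_
        rw [hausdorffDist_comm]
        exact hpointdist x hx n
      obtain ⟨z, hz, hzd⟩ := (hHsetc x n).exists_infDist_eq_dist (hHsetne x n) y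
      refine ⟨z, ?_, by rw [← hzd]; exact h1⟩
      rw [hbig n]
      exact Set.mem_iUnion.2 ⟨⟨x, hx⟩, hz⟩
  have hcont : Continuous pr := by rw [← hprcoe]; exact prc.continuous
  have hprSS : pr '' SS = pr '' K₀ := by
    apply Set.Subset.antisymm
    · rintro _ ⟨y, hy, rfl⟩
      rw [hSS_def] at hy
      obtain ⟨v₀, hv₀, hyv⟩ := Set.mem_iUnion₂.1 hy
      obtain ⟨x, hx, rfl⟩ := hv₀
      rw [hLtpr x] at hyv
      obtain ⟨u, hu, rfl⟩ := hyv
      obtain ⟨w, hw, rfl⟩ := hu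
      have heq : pr (pr x + (w : EuclideanSpace ℝ (Fin D))) = pr x := by
        rw [map_add, hidem, hprW _ w.2, add_zero]
      rw [heq]
      exact Set.mem_image_of_mem pr hx
    · rintro _ ⟨x, hx, rfl⟩
      obtain ⟨w, hw⟩ := (Att (pr x)).nonempty
      have hmem : pr x + (w : EuclideanSpace ℝ (Fin D)) ∈ SS :=
        hLtmem x hx ⟨_, Set.mem_image_of_mem _ hw, rfl⟩
      have heq : pr (pr x + (w : EuclideanSpace ℝ (Fin D))) = pr x := by
        rw [map_add, hidem, hprW _ w.2, add_zero]
      exact ⟨_, hmem, heq⟩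
  refine ⟨Lt, ?_, ?_, ?_⟩
  · -- properties of the attractors
    rintro _ ⟨x, hx, rfl⟩
    refine ⟨?_, ?_, ?_, ?_⟩
    · rw [hLtpr x]
      rintro _ ⟨w, hw, rfl⟩
      exact w.2
    · rw [hLtpr x]
      exact (Att (pr x)).isCompact.image continuous_subtype_val
    · rw [hLtpr x]
      exact (Att (pr x)).nonempty.image _
    · rw [hLtpr x]
      have hco : (Subtype.val '' ((T (pr x) (Att (pr x))) : Set ↥W))
          = Subtype.val '' ((Att (pr x)) : Set ↥W) := by rw [hfix]
      conv_rhs => rw [← hco, hTcoe, Set.image_iUnion]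
      apply Set.iUnion_congr
      intro i
      rw [Set.image_image, Set.image_image]
      apply Set.image_congr
      intro w _
      show A i (w : EuclideanSpace ℝ (Fin D)) + (A i (pr x) - pr x)
        = A i (w : EuclideanSpace ℝ (Fin D)) + (A i (pr (pr x)) - pr (pr x))
      rw [hidem]
  · -- convergence
    rw [← hSS_def]
    have htend : Tendsto (fun n : ℕ => c ^ n * M) atTop (𝓝 0) := by
      have h := (tendsto_pow_atTop_nhds_zero_of_lt_one hc0 hc1).mul_const M
      rwa [zero_mul] at h
    apply squeeze_zero (fun n => hausdorffDist_nonneg) (fun n => ?_) htend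
    rw [hausdorffDist_closure₂]
    exact hmain n
  · -- projection of the limit set
    rw [← hSS_def]
    apply Set.Subset.antisymm
    · refine le_trans (image_closure_subset_closure_image hcont) ?_
      rw [hprSS]
      exact le_of_eq ((hK₀c.image hcont).isClosed.closure_eq)
    · calc pr '' K₀ = pr '' SS := hprSS.symm
        _ ⊆ pr '' closure SS := Set.image_mono subset_closure
end
end

section
/- Let p ≥ 1 linear maps f_i(x) = A_i x on ℝ^D such that: (i) ‖A_i‖ ≤ 1 (operator norm) for all i; (ii) there exist N ≥ 1 and indices i_1,…,i_N ∈ {1,…,p} such that the matrix A_{i_N}⋯A_{i_1} has 1 as an eigenvalue. Then the sequence (H^n(B(0,1)))_n is decreasing and converges in the Hausdorff metric to L = ⋂_{n≥0} H^n(B(0,1)), with ρ(L) = 1. Moreover H_ρ^n(B(0,1)) = H^n(B(0,1)) and d_n = 1 for all n ≥ 0. -/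
open Metric Filter Pointwise Topology

noncomputable section

/-- The radius function `ρ(K) = sup {‖x‖ : x ∈ K}`. -/
def rad {D : ℕ} (K : Set (EuclideanSpace ℝ (Fin D))) : ℝ := sSup (norm '' K)

/-- The renormalized Hutchinson operator `H_ρ(K) = ρ(H(K))⁻¹ • H(K)`. -/
def hutchRho {D p : ℕ} (f : Fin (p + 1) → EuclideanSpace ℝ (Fin D) → EuclideanSpace ℝ (Fin D))
    (K : Set (EuclideanSpace ℝ (Fin D))) : Set (EuclideanSpace ℝ (Fin D)) :=
  (rad (hutch f K))⁻¹ • hutch f K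

section Aux

variable {D p : ℕ}
  (A : Fin (p + 1) → EuclideanSpace ℝ (Fin D) →L[ℝ] EuclideanSpace ℝ (Fin D))
  (f : Fin (p + 1) → EuclideanSpace ℝ (Fin D) → EuclideanSpace ℝ (Fin D))

lemma hutch_mono {K K' : Set (EuclideanSpace ℝ (Fin D))} (h : K ⊆ K') :
    hutch f K ⊆ hutch f K' :=
  Set.iUnion_mono fun _ => Set.image_mono h

lemma mem_hutch {K : Set (EuclideanSpace ℝ (Fin D))} {x} (i) (hx : x ∈ K) :
    f i x ∈ hutch f K :=
  Set.mem_iUnion.2 ⟨i, Set.mem_image_of_mem _ hx⟩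

lemma hutch_iter_mono (n : ℕ) {K K' : Set (EuclideanSpace ℝ (Fin D))} (h : K ⊆ K') :
    (hutch f)^[n] K ⊆ (hutch f)^[n] K' := by
  induction n generalizing K K' with
  | zero => simpa using h
  | succ n ih =>
    rw [Function.iterate_succ_apply, Function.iterate_succ_apply]
    exact ih (hutch_mono f h)

lemma prod_mem_iterate (hf : ∀ i x, f i x = A i x)
    (l : List (Fin (p + 1))) :
    ∀ (K : Set (EuclideanSpace ℝ (Fin D))) (x : EuclideanSpace ℝ (Fin D)), x ∈ K →
      ((l.map A).reverse.prod) x ∈ (hutch f)^[l.length] K := by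
  induction l with
  | nil => intro K x hx; simpa using hx
  | cons a t ih =>
    intro K x hx
    have h1 : ((a :: t).map A).reverse.prod = ((t.map A).reverse.prod) * (A a) := by
      simp
    have h2 : (A a) x ∈ hutch f K := by
      rw [← hf]; exact mem_hutch f a hx
    have h3 := ih (hutch f K) ((A a) x) h2
    rw [List.length_cons, Function.iterate_succ_apply, h1]
    simpa [ContinuousLinearMap.mul_apply] using h3

end Aux

/-- Proposition `prop:linboule`. For a linear IFS with `‖A_i‖ ≤ 1` such that
some finite product `A_{i_N} ⋯ A_{i_1}` has eigenvalue `1`, the orbit `(H^n(B(0,1)))_n` is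
decreasing and converges in the Hausdorff metric to `L = ⋂_n H^n(B(0,1))` with `ρ(L) = 1`;
moreover `H_ρ^n(B(0,1)) = H^n(B(0,1))` and `d_n = 1` for all `n`. -/
theorem stmt14 {D p : ℕ}
    (A : Fin (p + 1) → EuclideanSpace ℝ (Fin D) →L[ℝ] EuclideanSpace ℝ (Fin D))
    (f : Fin (p + 1) → EuclideanSpace ℝ (Fin D) → EuclideanSpace ℝ (Fin D))
    (hf : ∀ i x, f i x = A i x)
    (hA : ∀ i, ‖A i‖ ≤ 1)
    (heig : ∃ N : ℕ, 1 ≤ N ∧ ∃ w : Fin N → Fin (p + 1),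
      Module.End.HasEigenvalue
        (((List.ofFn fun j : Fin N => A (w j)).reverse.prod).toLinearMap) 1) :
    (∀ n, (hutch f)^[n + 1] (closedBall (0 : EuclideanSpace ℝ (Fin D)) 1) ⊆
      (hutch f)^[n] (closedBall 0 1)) ∧
    Tendsto (fun n => hausdorffDist ((hutch f)^[n] (closedBall (0 : EuclideanSpace ℝ (Fin D)) 1))
      (⋂ n, (hutch f)^[n] (closedBall 0 1))) atTop (𝓝 0) ∧
    rad (⋂ n, (hutch f)^[n] (closedBall (0 : EuclideanSpace ℝ (Fin D)) 1)) = 1 ∧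
    (∀ n, (hutchRho f)^[n] (closedBall (0 : EuclideanSpace ℝ (Fin D)) 1) =
      (hutch f)^[n] (closedBall 0 1)) ∧
    (∀ n, rad (hutch f ((hutchRho f)^[n] (closedBall (0 : EuclideanSpace ℝ (Fin D)) 1))) = 1) := by
  set B : Set (EuclideanSpace ℝ (Fin D)) := closedBall 0 1 with hB
  set K : ℕ → Set (EuclideanSpace ℝ (Fin D)) := fun n => (hutch f)^[n] B with hK
  -- H(B) ⊆ B
  have hHB : hutch f B ⊆ B := by
    rintro x hx
    simp only [hutch, Set.mem_iUnion] at hx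
    obtain ⟨i, y, hy, rfl⟩ := hx
    rw [hB, mem_closedBall_zero_iff] at hy ⊢
    rw [hf]
    calc ‖(A i) y‖ ≤ ‖A i‖ * ‖y‖ := (A i).le_opNorm y
      _ ≤ 1 * 1 := by
          apply mul_le_mul (hA i) hy (norm_nonneg y) zero_le_one
      _ = 1 := one_mul 1
  -- decreasing
  have hdec : ∀ n, K (n + 1) ⊆ K n := by
    intro n
    rw [hK]
    simp only [Function.iterate_succ_apply]
    exact hutch_iter_mono f n hHB
  have hanti : Antitone K := antitone_nat_of_succ_le hdec
  -- eigenvector of norm 1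
  obtain ⟨N, hN1, w, heig⟩ := heig
  obtain ⟨v, hv⟩ := heig.exists_hasEigenvector
  set M : EuclideanSpace ℝ (Fin D) →L[ℝ] EuclideanSpace ℝ (Fin D) :=
    (List.ofFn fun j : Fin N => A (w j)).reverse.prod with hM
  have hMv : M v = v := by
    have := hv.apply_eq_smul
    simpa using this
  have hv0 : v ≠ 0 := hv.right
  set u : EuclideanSpace ℝ (Fin D) := ‖v‖⁻¹ • v with hu
  have hnu : ‖u‖ = 1 := by
    rw [hu, norm_smul, norm_inv, norm_norm]
    field_simp [norm_ne_zero_iff.2 hv0]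
  have hMu : M u = u := by rw [hu, map_smul, hMv]
  have huB : u ∈ B := by rw [hB, mem_closedBall_zero_iff, hnu]
  -- u ∈ K n for all n
  have hlist : (List.ofFn fun j : Fin N => A (w j)) = (List.ofFn w).map A := by
    simp [List.map_ofFn]; rfl
  have hstep : ∀ n, u ∈ K n → u ∈ K (N + n) := by
    intro n hn
    have := prod_mem_iterate A f hf (List.ofFn w) (K n) u hn
    rw [← hlist, ← hM, hMu, List.length_ofFn] at this
    show u ∈ (hutch f)^[N + n] B
    rw [Function.iterate_add_apply]
    exact this
  have humul : ∀ k, u ∈ K (k * N) := by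
    intro k
    induction k with
    | zero => simpa [hK] using huB
    | succ k ih =>
      have := hstep (k * N) ih
      have heq : N + k * N = (k + 1) * N := by ring
      rwa [heq] at this
  have huall : ∀ n, u ∈ K n := by
    intro n
    have h1 : n ≤ n * N := Nat.le_mul_of_pos_right n (by omega)
    exact hanti h1 (humul n)
  set L : Set (EuclideanSpace ℝ (Fin D)) := ⋂ n, K n with hL
  have huL : u ∈ L := Set.mem_iInter.2 huall
  have hLB : L ⊆ B := (Set.iInter_subset K 0).trans (by rw [hK]; simp)
  have hKB : ∀ n, K n ⊆ B := fun n => (hanti (Nat.zero_le n)).trans (by rw [hK]; simp)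
  -- rad lemma
  have rad_one : ∀ (S : Set (EuclideanSpace ℝ (Fin D))), u ∈ S → S ⊆ B → rad S = 1 := by
    intro S huS hSB
    have hbdd : ∀ y ∈ norm '' S, y ≤ 1 := by
      rintro y ⟨x, hx, rfl⟩
      exact mem_closedBall_zero_iff.1 (hSB hx)
    apply le_antisymm
    · exact csSup_le ⟨‖u‖, Set.mem_image_of_mem _ huS⟩ hbdd
    · have : (1 : ℝ) ∈ norm '' S := ⟨u, huS, hnu⟩
      exact le_csSup ⟨1, hbdd⟩ this
  -- compactness
  have hcomp : ∀ n, IsCompact (K n) := by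
    intro n
    induction n with
    | zero => simpa [hK, hB] using isCompact_closedBall (0 : EuclideanSpace ℝ (Fin D)) 1
    | succ n ih =>
      show IsCompact ((hutch f)^[n + 1] B)
      rw [Function.iterate_succ_apply']
      apply isCompact_iUnion
      intro i
      have : f i '' ((hutch f)^[n] B) = (A i) '' ((hutch f)^[n] B) :=
        Set.image_congr fun x _ => hf i x
      rw [this]
      exact ih.image (A i).continuous
  -- convergence
  have hconv : Tendsto (fun n => hausdorffDist (K n) L) atTop (𝓝 0) := by
    rw [Metric.tendsto_atTop]
    intro ε hε
    -- find n0 with K n0 ⊆ thickening (ε/2) L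
    have hex : ∃ n0, K n0 ⊆ thickening (ε / 2) L := by
      by_contra h
      push_neg at h
      have hne : ∀ n, (K n ∩ (thickening (ε / 2) L)ᶜ).Nonempty := by
        intro n
        obtain ⟨x, hx1, hx2⟩ := Set.not_subset.1 (h n)
        exact ⟨x, hx1, hx2⟩
      have hantit : Antitone (fun n => K n ∩ (thickening (ε / 2) L)ᶜ) :=
        fun m n hmn => Set.inter_subset_inter_left _ (hanti hmn)
      have hnonempty := IsCompact.nonempty_iInter_of_directed_nonempty_isCompact_isClosed
        (fun n => K n ∩ (thickening (ε / 2) L)ᶜ) hantit.directed_ge hne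
        (fun n => (hcomp n).inter_right isOpen_thickening.isClosed_compl)
        (fun n => ((hcomp n).isClosed).inter isOpen_thickening.isClosed_compl)
      obtain ⟨x, hx⟩ := hnonempty
      rw [Set.mem_iInter] at hx
      have hxL : x ∈ L := Set.mem_iInter.2 fun n => (hx n).1
      have : x ∈ thickening (ε / 2) L := self_subset_thickening (half_pos hε) L hxL
      exact (hx 0).2 this
    obtain ⟨n0, hn0⟩ := hex
    refine ⟨n0, fun n hn => ?_⟩
    have hsub : K n ⊆ thickening (ε / 2) L := (hanti hn).trans hn0
    have hd : hausdorffDist (K n) L ≤ ε / 2 := by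
      apply hausdorffDist_le_of_mem_dist (le_of_lt (half_pos hε))
      · intro x hx
        obtain ⟨y, hy, hxy⟩ := mem_thickening_iff.1 (hsub hx)
        exact ⟨y, hy, le_of_lt hxy⟩
      · intro y hy
        exact ⟨y, Set.iInter_subset K n hy, by simp [le_of_lt (half_pos hε)]⟩
    rw [Real.dist_eq, sub_zero, abs_of_nonneg hausdorffDist_nonneg]
    exact lt_of_le_of_lt hd (half_lt_self hε)
  -- rad of iterates
  have hradn : ∀ n, rad (hutch f (K n)) = 1 := by
    intro n
    have : hutch f (K n) = K (n + 1) :=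
      (Function.iterate_succ_apply' (hutch f) n B).symm
    rw [this]
    exact rad_one _ (huall (n + 1)) (hKB (n + 1))
  have hRho : ∀ n, (hutchRho f)^[n] B = K n := by
    intro n
    induction n with
    | zero => rw [hK]; simp
    | succ n ih =>
      rw [Function.iterate_succ_apply', ih, hutchRho, hradn n, inv_one, one_smul]
      exact (Function.iterate_succ_apply' (hutch f) n B).symm
  refine ⟨hdec, hconv, rad_one L huL hLB, hRho, fun n => by rw [hRho n]; exact hradn n⟩
end
end

section
/- Let p ≥ 1 linear maps f_i : ℝ² → ℝ² with matrices A_i = [[a_i, b_i],[c_i, d_i]] such that det(A_i) ≠ 0 and f_i(ℙ) = ℙ, where ℙ = {(x,y) ∈ ℝ² : x ≥ 0} \ {0}. Let K_0 ⊆ ℝ² be compact, nonempty, symmetric and star-shaped with respect to the origin, and assume (H^n(K_0))_n converges in the Hausdorff metric to a set L ≠ {0}. Then L is symmetric and star-shaped with respect to the origin, and its set of slopes S_L is a nonempty invariant set of the Hutchinson operator Ĥ = ⋃_{i=1}^p f̂_i, where f̂_i : [−∞,∞] → [−∞,∞] is the homographic function f̂_i(z) = (d_i z + c_i)/(b_i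 z + a_i), i.e., S_L = ⋃_{i=1}^p f̂_i(S_L). -/
open Metric Filter Pointwise Topology

noncomputable section

/-- The Hutchinson operator on `ℝ²`. -/
def hutch2 {p : ℕ} (f : Fin (p + 1) → ℝ × ℝ → ℝ × ℝ) (K : Set (ℝ × ℝ)) : Set (ℝ × ℝ) :=
  ⋃ i, f i '' K

/-- The closed half plane `ℙ = {(x,y) : x ≥ 0} \ {0}`. -/
def halfPlane : Set (ℝ × ℝ) := {v | 0 ≤ v.1} \ {0}

/-- The slope `tan θ ∈ [−∞, ∞]` of a point of `ℙ` written `(R cos θ, R sin θ)`,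
`θ ∈ [−π/2, π/2]`, with the convention `tan(±π/2) = ±∞`. -/
def slopePt (v : ℝ × ℝ) : EReal :=
  if v.1 = 0 then (if 0 < v.2 then ⊤ else ⊥) else ((v.2 / v.1 : ℝ) : EReal)

/-- The set of slopes `S_K` of a set `K ⊆ ℝ²`. -/
def slopes (K : Set (ℝ × ℝ)) : Set EReal := slopePt '' (K ∩ halfPlane)

/-- The homographic function `z ↦ (d z + c)/(b z + a)` on `[−∞, ∞]`. -/
def homog (a b c d : ℝ) (z : EReal) : EReal :=
  if z = ⊤ then (if b ≠ 0 then ((d / b : ℝ) : EReal) else (if 0 < d then ⊤ else ⊥))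
  else if z = ⊥ then (if b ≠ 0 then ((d / b : ℝ) : EReal) else (if 0 < d then ⊥ else ⊤))
  else if b * z.toReal + a = 0 then (if 0 < d * z.toReal + c then ⊤ else ⊥)
  else (((d * z.toReal + c) / (b * z.toReal + a) : ℝ) : EReal)

lemma hp_iff {v : ℝ × ℝ} : v ∈ halfPlane ↔ 0 ≤ v.1 ∧ v ≠ 0 := by
  simp [halfPlane, Set.mem_diff]

lemma slopePt_mk (x y : ℝ) :
    slopePt (x, y) = if x = 0 then (if 0 < y then (⊤ : EReal) else ⊥) else ((y / x : ℝ) : EReal) :=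
  rfl

lemma homog_top {a b c d : ℝ} (hb : b ≠ 0) : homog a b c d ⊤ = ((d / b : ℝ) : EReal) := by
  simp [homog, hb]

lemma homog_bot {a b c d : ℝ} (hb : b ≠ 0) : homog a b c d ⊥ = ((d / b : ℝ) : EReal) := by
  simp [homog, hb]

lemma homog_top' {a c d : ℝ} : homog a 0 c d ⊤ = if 0 < d then (⊤ : EReal) else ⊥ := by
  simp [homog]

lemma homog_bot' {a c d : ℝ} : homog a 0 c d ⊥ = if 0 < d then (⊥ : EReal) else ⊤ := by
  simp [homog]

lemma slope_image {a b c d : ℝ} (hdet : a * d - b * c ≠ 0) {v : ℝ × ℝ}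
    (hv : v ∈ halfPlane)
    (hfv : ((a * v.1 + b * v.2, c * v.1 + d * v.2) : ℝ × ℝ) ∈ halfPlane) :
    slopePt (a * v.1 + b * v.2, c * v.1 + d * v.2) = homog a b c d (slopePt v) := by
  obtain ⟨x, y⟩ := v
  obtain ⟨hx0, hv0⟩ := hp_iff.mp hv
  obtain ⟨hw0, hw0'⟩ := hp_iff.mp hfv
  simp only at hx0 hw0 hw0' ⊢
  rw [slopePt_mk, slopePt_mk]
  rcases eq_or_lt_of_le hx0 with hx | hx
  · -- x = 0
    have hx' : x = 0 := hx.symm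
    subst hx'
    have hy : y ≠ 0 := by
      intro h; exact hv0 (by simp [h, Prod.ext_iff])
    simp only [mul_zero, zero_add] at hw0 hw0' ⊢
    rcases eq_or_ne b 0 with hb | hb
    · have hd : d ≠ 0 := by
        intro h; apply hdet; rw [hb, h]; ring
      subst hb
      simp only [zero_mul] at hw0 ⊢
      simp only [if_true]
      rcases lt_or_gt_of_ne hy with hy1 | hy1
      · rw [if_neg (show ¬(0:ℝ) < y from by linarith), homog_bot']
        rcases lt_or_gt_of_ne hd with hd1 | hd1
        · rw [if_pos (show (0:ℝ) < d * y from by nlinarith),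
            if_neg (show ¬(0:ℝ) < d from by linarith)]
        · rw [if_neg (show ¬(0:ℝ) < d * y from by nlinarith), if_pos hd1]
      · rw [if_pos hy1, homog_top']
        rcases lt_or_gt_of_ne hd with hd1 | hd1
        · rw [if_neg (show ¬(0:ℝ) < d * y from by nlinarith),
            if_neg (show ¬(0:ℝ) < d from by linarith)]
        · rw [if_pos (show (0:ℝ) < d * y from by nlinarith), if_pos hd1]
    · have hby : 0 < b * y := lt_of_le_of_ne hw0 (Ne.symm (mul_ne_zero hb hy))
      rw [if_neg (ne_of_gt hby)]
      simp only [if_true]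
      have hdy : d * y / (b * y) = d / b := by
        rw [mul_comm d y, mul_comm b y, mul_div_mul_left _ _ hy]
      rw [hdy]
      rcases lt_or_gt_of_ne hy with hy1 | hy1
      · rw [if_neg (show ¬(0:ℝ) < y from by linarith), homog_bot hb]
      · rw [if_pos hy1, homog_top hb]
  · -- 0 < x
    have hxne : x ≠ 0 := ne_of_gt hx
    rw [if_neg hxne, homog, if_neg (EReal.coe_ne_top _), if_neg (EReal.coe_ne_bot _),
      EReal.toReal_coe]
    have hkey : b * (y / x) + a = (a * x + b * y) / x := by field_simp; ring
    have hkey2 : d * (y / x) + c = (c * x + d * y) / x := by field_simp; ring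
    rw [hkey, hkey2]
    rcases eq_or_ne (a * x + b * y) 0 with h1 | h1
    · rw [if_pos h1, if_pos (show (a * x + b * y) / x = 0 by rw [h1, zero_div])]
      have hiff : (0 < (c * x + d * y) / x) ↔ 0 < c * x + d * y :=
        div_pos_iff_of_pos_right hx
      simp only [hiff]
    · rw [if_neg h1, if_neg (div_ne_zero h1 hxne)]
      congr 1
      field_simp

lemma lin_inj {a b c d : ℝ} (hdet : a * d - b * c ≠ 0) {v w : ℝ × ℝ}
    (h : (a * v.1 + b * v.2, c * v.1 + d * v.2) = ((a * w.1 + b * w.2, c * w.1 + d * w.2) : ℝ × ℝ)) :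
    v = w := by
  have h1 := congrArg Prod.fst h
  have h2 := congrArg Prod.snd h
  simp only at h1 h2
  have hx : (a * d - b * c) * (v.1 - w.1) = 0 := by linear_combination d * h1 - b * h2
  have hy : (a * d - b * c) * (v.2 - w.2) = 0 := by linear_combination a * h2 - c * h1
  have e1 : v.1 = w.1 := by
    have := (mul_eq_zero.mp hx).resolve_left hdet; linarith
  have e2 : v.2 = w.2 := by
    have := (mul_eq_zero.mp hy).resolve_left hdet; linarith
  exact Prod.ext e1 e2

lemma slopes_image {a b c d : ℝ} {f : ℝ × ℝ → ℝ × ℝ}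
    (hf : ∀ v, f v = (a * v.1 + b * v.2, c * v.1 + d * v.2))
    (hdet : a * d - b * c ≠ 0) (hP : f '' halfPlane = halfPlane) (K : Set (ℝ × ℝ)) :
    slopePt '' (f '' K ∩ halfPlane) = homog a b c d '' (slopePt '' (K ∩ halfPlane)) := by
  ext z
  constructor
  · rintro ⟨w, ⟨⟨v, hvK, rfl⟩, hwP⟩, rfl⟩
    have hvP : v ∈ halfPlane := by
      have : f v ∈ f '' halfPlane := by rw [hP]; exact hwP
      rcases this with ⟨v', hv', he⟩
      have : v' = v := lin_inj hdet (by rw [← hf, ← hf, he])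
      rwa [← this]
    refine ⟨slopePt v, ⟨v, ⟨hvK, hvP⟩, rfl⟩, ?_⟩
    rw [← slope_image hdet hvP (by rw [← hf]; exact hwP), ← hf]
  · rintro ⟨z', ⟨v, ⟨hvK, hvP⟩, rfl⟩, rfl⟩
    have hfvP : f v ∈ halfPlane := hP ▸ Set.mem_image_of_mem f hvP
    refine ⟨f v, ⟨Set.mem_image_of_mem f hvK, hfvP⟩, ?_⟩
    rw [hf]
    exact slope_image hdet hvP (by rw [← hf]; exact hfvP)

lemma dist_lin_le (a b c d : ℝ) (v w : ℝ × ℝ) :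
    dist ((a * v.1 + b * v.2, c * v.1 + d * v.2) : ℝ × ℝ)
      ((a * w.1 + b * w.2, c * w.1 + d * w.2) : ℝ × ℝ)
      ≤ (|a| + |b| + |c| + |d|) * dist v w := by
  have h1 : |v.1 - w.1| ≤ dist v w := by
    rw [Prod.dist_eq, Real.dist_eq]; exact le_max_left _ _
  have h2 : |v.2 - w.2| ≤ dist v w := by
    rw [Prod.dist_eq, Real.dist_eq]; exact le_max_right _ _
  rw [Prod.dist_eq]
  apply max_le
  · calc dist (a * v.1 + b * v.2) (a * w.1 + b * w.2)
        = |a * (v.1 - w.1) + b * (v.2 - w.2)| := by rw [Real.dist_eq]; congr 1; ring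
      _ ≤ |a * (v.1 - w.1)| + |b * (v.2 - w.2)| := abs_add_le _ _
      _ = |a| * |v.1 - w.1| + |b| * |v.2 - w.2| := by rw [abs_mul, abs_mul]
      _ ≤ (|a| + |b| + |c| + |d|) * dist v w := by
          nlinarith [abs_nonneg a, abs_nonneg b, abs_nonneg c, abs_nonneg d,
            dist_nonneg (x := v) (y := w), abs_nonneg (v.1 - w.1), abs_nonneg (v.2 - w.2)]
  · calc dist (c * v.1 + d * v.2) (c * w.1 + d * w.2)
        = |c * (v.1 - w.1) + d * (v.2 - w.2)| := by rw [Real.dist_eq]; congr 1; ring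
      _ ≤ |c * (v.1 - w.1)| + |d * (v.2 - w.2)| := abs_add_le _ _
      _ = |c| * |v.1 - w.1| + |d| * |v.2 - w.2| := by rw [abs_mul, abs_mul]
      _ ≤ (|a| + |b| + |c| + |d|) * dist v w := by
          nlinarith [abs_nonneg a, abs_nonneg b, abs_nonneg c, abs_nonneg d,
            dist_nonneg (x := v) (y := w), abs_nonneg (v.1 - w.1), abs_nonneg (v.2 - w.2)]

lemma nonpos_of_forall_pos_le {x : ℝ} (h : ∀ ε > 0, x ≤ ε) : x ≤ 0 := by
  by_contra h'
  push_neg at h'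
  have := h (x / 2) (by linarith)
  linarith

/-- Proposition `prop:homo`. For linear maps `f_i` of `ℝ²` with invertible
matrices `[[a_i, b_i],[c_i, d_i]]` mapping `ℙ` onto `ℙ`, if `K₀` is compact, nonempty,
symmetric and star-shaped with respect to the origin and `(H^n(K₀))_n` converges to a set
`L ≠ {0}`, then `L` is symmetric and star-shaped with respect to the origin and its set of
slopes `S_L` is a nonempty invariant set of the Hutchinson operator of the homographic
functions `f̂_i(z) = (d_i z + c_i)/(b_i z + a_i)`. -/
theorem stmt15 {p : ℕ}
    (a b c d : Fin (p + 1) → ℝ)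
    (f : Fin (p + 1) → ℝ × ℝ → ℝ × ℝ)
    (hf : ∀ i v, f i v = (a i * v.1 + b i * v.2, c i * v.1 + d i * v.2))
    (hdet : ∀ i, a i * d i - b i * c i ≠ 0)
    (hP : ∀ i, f i '' halfPlane = halfPlane)
    (K₀ : Set (ℝ × ℝ)) (hK₀c : IsCompact K₀) (hK₀ne : K₀.Nonempty)
    (hK₀sym : ∀ x ∈ K₀, -x ∈ K₀)
    (hK₀star : ∀ x ∈ K₀, ∀ r ∈ Set.Icc (0 : ℝ) 1, r • x ∈ K₀)
    (L : Set (ℝ × ℝ)) (hLc : IsCompact L) (hLne : L.Nonempty) (hL0 : L ≠ {0})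
    (hconv : Tendsto (fun n => hausdorffDist ((hutch2 f)^[n] K₀) L) atTop (𝓝 0)) :
    (∀ x ∈ L, -x ∈ L) ∧
    (∀ x ∈ L, ∀ r ∈ Set.Icc (0 : ℝ) 1, r • x ∈ L) ∧
    (slopes L).Nonempty ∧
    slopes L = ⋃ i, homog (a i) (b i) (c i) (d i) '' slopes L := by
  classical
  have hfc : ∀ i, Continuous (f i) := by
    intro i
    have : f i = fun v => (a i * v.1 + b i * v.2, c i * v.1 + d i * v.2) := funext (hf i)
    rw [this]; fun_prop
  have hfneg : ∀ i v, f i (-v) = -f i v := by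
    intro i v
    rw [hf, hf]
    simp only [Prod.fst_neg, Prod.snd_neg, Prod.neg_mk, Prod.mk.injEq]
    constructor <;> ring
  have hfsmul : ∀ i (r : ℝ) v, f i (r • v) = r • f i v := by
    intro i r v
    rw [hf, hf]
    simp only [Prod.smul_fst, Prod.smul_snd, Prod.smul_mk, smul_eq_mul, Prod.mk.injEq]
    constructor <;> ring
  have hKcomp : ∀ n, IsCompact ((hutch2 f)^[n] K₀) := by
    intro n
    induction n with
    | zero => simpa using hK₀c
    | succ n ih =>
      rw [Function.iterate_succ_apply']
      exact isCompact_iUnion fun i => ih.image (hfc i)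
  have hKne : ∀ n, ((hutch2 f)^[n] K₀).Nonempty := by
    intro n
    induction n with
    | zero => simpa using hK₀ne
    | succ n ih =>
      rw [Function.iterate_succ_apply']
      obtain ⟨x, hx⟩ := ih
      exact ⟨f 0 x, Set.mem_iUnion.mpr ⟨0, Set.mem_image_of_mem _ hx⟩⟩
  have hfin : ∀ n, EMetric.hausdorffEdist ((hutch2 f)^[n] K₀) L ≠ ⊤ := fun n =>
    hausdorffEdist_ne_top_of_nonempty_of_bounded (hKne n) hLne (hKcomp n).isBounded
      hLc.isBounded
  have happrox : ∀ ε > 0, ∃ n, hausdorffDist ((hutch2 f)^[n] K₀) L < ε ∧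
      hausdorffDist ((hutch2 f)^[n + 1] K₀) L < ε := by
    intro ε hε
    have := hconv.eventually_lt_const hε
    rw [eventually_atTop] at this
    obtain ⟨N, hN⟩ := this
    exact ⟨N, hN N le_rfl, hN (N + 1) (by omega)⟩
  have hLcl : IsClosed L := hLc.isClosed
  -- key stability lemma
  have key : ∀ (g : ℝ × ℝ → ℝ × ℝ) (C : ℝ), 0 ≤ C →
      (∀ v w, dist (g v) (g w) ≤ C * dist v w) →
      (∀ n, ∀ x ∈ (hutch2 f)^[n] K₀, g x ∈ (hutch2 f)^[n] K₀) →
      ∀ x ∈ L, g x ∈ L := by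
    intro g C hC hlip hinv x hx
    rw [hLcl.mem_iff_infDist_zero hLne]
    refine le_antisymm (nonpos_of_forall_pos_le ?_) infDist_nonneg
    intro ε hε
    set δ := ε / (C + 1) with hδ
    have hδ0 : 0 < δ := div_pos hε (by linarith)
    obtain ⟨n, hn, -⟩ := happrox δ hδ0
    obtain ⟨y, hy, hdxy⟩ := exists_dist_lt_of_hausdorffDist_lt' hx hn (hfin n)
    have h3 : infDist (g y) L ≤ hausdorffDist ((hutch2 f)^[n] K₀) L :=
      infDist_le_hausdorffDist_of_mem (hinv n y hy) (hfin n)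
    have h4 : infDist (g x) L ≤ infDist (g y) L + dist (g x) (g y) :=
      infDist_le_infDist_add_dist
    have h5 : dist (g x) (g y) ≤ C * dist x y := hlip x y
    have h6 : dist x y < δ := by rwa [dist_comm] at hdxy
    have h7 : (C + 1) * δ = ε := by rw [hδ]; field_simp [show C + 1 ≠ 0 by linarith]
    nlinarith [dist_nonneg (x := x) (y := y)]
  -- symmetry
  have hinv_neg : ∀ n, ∀ x ∈ (hutch2 f)^[n] K₀, -x ∈ (hutch2 f)^[n] K₀ := by
    intro n
    induction n with
    | zero => simpa using hK₀sym
    | succ n ih =>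
      intro x hx
      rw [Function.iterate_succ_apply'] at hx ⊢
      rcases Set.mem_iUnion.mp hx with ⟨i, v, hv, rfl⟩
      exact Set.mem_iUnion.mpr ⟨i, -v, ih v hv, hfneg i v⟩
  have hsymL : ∀ x ∈ L, -x ∈ L := by
    refine key (fun v => -v) 1 zero_le_one (fun v w => ?_) hinv_neg
    rw [dist_neg_neg, one_mul]
  -- star-shaped
  have hinv_smul : ∀ r : ℝ, r ∈ Set.Icc (0 : ℝ) 1 →
      ∀ n, ∀ x ∈ (hutch2 f)^[n] K₀, r • x ∈ (hutch2 f)^[n] K₀ := by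
    intro r hr n
    induction n with
    | zero => simpa using fun x hx => hK₀star x hx r hr
    | succ n ih =>
      intro x hx
      rw [Function.iterate_succ_apply'] at hx ⊢
      rcases Set.mem_iUnion.mp hx with ⟨i, v, hv, rfl⟩
      exact Set.mem_iUnion.mpr ⟨i, r • v, ih v hv, hfsmul i r v⟩
  have hstarL : ∀ x ∈ L, ∀ r ∈ Set.Icc (0 : ℝ) 1, r • x ∈ L := by
    intro x hx r hr
    refine key (fun v => r • v) 1 zero_le_one (fun v w => ?_) (hinv_smul r hr) x hx
    rw [dist_smul₀, Real.norm_eq_abs, one_mul]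
    exact mul_le_of_le_one_left dist_nonneg (abs_le.mpr ⟨by linarith [hr.1], hr.2⟩)
  -- fixed point
  have hsub1 : hutch2 f L ⊆ L := by
    intro x hx
    rcases Set.mem_iUnion.mp hx with ⟨i, v, hv, rfl⟩
    rw [hLcl.mem_iff_infDist_zero hLne]
    refine le_antisymm (nonpos_of_forall_pos_le ?_) infDist_nonneg
    intro ε hε
    set C := |a i| + |b i| + |c i| + |d i| with hCdef
    have hC : 0 ≤ C := by positivity
    set δ := ε / (C + 1) with hδ
    have hδ0 : 0 < δ := div_pos hε (by linarith)
    obtain ⟨n, hn1, hn2⟩ := happrox δ hδ0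
    obtain ⟨y, hy, hdvy⟩ := exists_dist_lt_of_hausdorffDist_lt' hv hn1 (hfin n)
    have hfy : f i y ∈ (hutch2 f)^[n + 1] K₀ := by
      rw [Function.iterate_succ_apply']
      exact Set.mem_iUnion.mpr ⟨i, y, hy, rfl⟩
    have h3 : infDist (f i y) L ≤ hausdorffDist ((hutch2 f)^[n + 1] K₀) L :=
      infDist_le_hausdorffDist_of_mem hfy (hfin (n + 1))
    have h4 : dist (f i v) (f i y) ≤ C * dist v y := by
      rw [hf i v, hf i y]; exact dist_lin_le _ _ _ _ _ _
    have h5 : infDist (f i v) L ≤ infDist (f i y) L + dist (f i v) (f i y) :=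
      infDist_le_infDist_add_dist
    have h6 : dist v y < δ := by rwa [dist_comm] at hdvy
    have h7 : (C + 1) * δ = ε := by rw [hδ]; field_simp [show C + 1 ≠ 0 by linarith]
    nlinarith [dist_nonneg (x := v) (y := y)]
  have hHLc : IsCompact (hutch2 f L) := isCompact_iUnion fun i => hLc.image (hfc i)
  have hHLne : (hutch2 f L).Nonempty :=
    ⟨f 0 hLne.choose, Set.mem_iUnion.mpr ⟨0, Set.mem_image_of_mem _ hLne.choose_spec⟩⟩
  have hsub2 : L ⊆ hutch2 f L := by
    intro x hx
    rw [hHLc.isClosed.mem_iff_infDist_zero hHLne]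
    refine le_antisymm (nonpos_of_forall_pos_le ?_) infDist_nonneg
    intro ε hε
    set Cm := ∑ i : Fin (p + 1), (|a i| + |b i| + |c i| + |d i|) with hCm
    have hCm0 : 0 ≤ Cm := Finset.sum_nonneg fun i _ => by positivity
    have hCi : ∀ i : Fin (p + 1), |a i| + |b i| + |c i| + |d i| ≤ Cm := fun i =>
      Finset.single_le_sum (f := fun i => |a i| + |b i| + |c i| + |d i|)
        (fun j _ => by positivity) (Finset.mem_univ i)
    set δ := ε / (Cm + 1) with hδ
    have hδ0 : 0 < δ := div_pos hε (by linarith)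
    obtain ⟨n, hn1, hn2⟩ := happrox δ hδ0
    obtain ⟨y, hy, hdyx⟩ := exists_dist_lt_of_hausdorffDist_lt' hx hn2 (hfin (n + 1))
    rw [Function.iterate_succ_apply'] at hy
    rcases Set.mem_iUnion.mp hy with ⟨i, w, hw, rfl⟩
    obtain ⟨u, hu, hdwu⟩ := exists_dist_lt_of_hausdorffDist_lt hw hn1 (hfin n)
    have hfu : f i u ∈ hutch2 f L := Set.mem_iUnion.mpr ⟨i, u, hu, rfl⟩
    have h4 : dist (f i w) (f i u) ≤ (|a i| + |b i| + |c i| + |d i|) * dist w u := by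
      rw [hf i w, hf i u]; exact dist_lin_le _ _ _ _ _ _
    have h5 : infDist x (hutch2 f L) ≤ dist x (f i u) := infDist_le_dist_of_mem hfu
    have h6 : dist x (f i u) ≤ dist x (f i w) + dist (f i w) (f i u) := dist_triangle _ _ _
    have h7 : dist x (f i w) < δ := by rwa [dist_comm] at hdyx
    have h8 : (Cm + 1) * δ = ε := by rw [hδ]; field_simp [show Cm + 1 ≠ 0 by linarith]
    nlinarith [dist_nonneg (x := w) (y := u), hCi i,
      mul_le_mul_of_nonneg_right (hCi i) (dist_nonneg (x := w) (y := u))]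
  have hLfix : hutch2 f L = L := hsub1.antisymm hsub2
  -- slopes nonempty
  obtain ⟨x0, hx0L, hx0⟩ : ∃ x ∈ L, x ≠ 0 := by
    by_contra hcon
    push_neg at hcon
    exact hL0 (Set.eq_singleton_iff_nonempty_unique_mem.mpr ⟨hLne, hcon⟩)
  have hne : (slopes L).Nonempty := by
    rcases le_or_gt 0 x0.1 with h | h
    · exact ⟨slopePt x0, ⟨x0, ⟨hx0L, hp_iff.mpr ⟨h, hx0⟩⟩, rfl⟩⟩
    · refine ⟨slopePt (-x0), ⟨-x0, ⟨hsymL x0 hx0L, hp_iff.mpr ⟨?_, neg_ne_zero.mpr hx0⟩⟩, rfl⟩⟩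
      rw [Prod.fst_neg]; linarith
  refine ⟨hsymL, hstarL, hne, ?_⟩
  calc slopes L = slopes (hutch2 f L) := by rw [hLfix]
    _ = ⋃ i, slopePt '' (f i '' L ∩ halfPlane) := by
        simp only [slopes, hutch2, Set.iUnion_inter, Set.image_iUnion]
    _ = ⋃ i, homog (a i) (b i) (c i) (d i) '' slopes L :=
        Set.iUnion_congr fun i => slopes_image (hf i) (hdet i) (hP i) L
end
end

section
/- Let φ : 𝒦 → [0,∞) be a size function, i.e., φ is continuous with respect to the Hausdorff metric, monotone (K ⊆ K' implies φ(K) ≤ φ(K')), and homogeneous (φ(αK) = |α|φ(K) for all α ∈ ℝ). Let p ≥ 1 affine maps f_i(x) = A_i x + b_i on ℝ^D, with λ_H = max_{1≤i≤p} ‖A_i‖, and let K_0 be a nonempty compact subset of ℝ^D with well-defined φ-renormalized orbit (K_n)_n and normalizing sequence (d_n)_n. Then: (i) if (d_n)_n converges to d > λ_H, then (K_n)_n converges in the Hausdorff metric to the attractor L_d of the IFS {f_1/d, …, f_p/d}, and d satisfies φ({(d·Id − A_1)^{-1}b_1, …, (d·Id − A_p)^{-1}b_p}) ≤ 1; (ii)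 if b_i = 0 for all i and (H^n(K_0))_n converges to a nonempty compact L with φ(L) ≠ 0, then (K_n)_n converges to K = (1/φ(L)) L. -/
open Metric Filter Pointwise Topology

noncomputable section

/-- The `φ`-renormalized Hutchinson operator `H_φ(K) = φ(H(K))⁻¹ • H(K)`. -/
def hutchPhi {D p : ℕ} (φ : Set (EuclideanSpace ℝ (Fin D)) → ℝ)
    (f : Fin (p + 1) → EuclideanSpace ℝ (Fin D) → EuclideanSpace ℝ (Fin D))
    (K : Set (EuclideanSpace ℝ (Fin D))) : Set (EuclideanSpace ℝ (Fin D)) :=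
  (φ (hutch f K))⁻¹ • hutch f K

section auxiliaries

open Bornology


open Bornology

lemma exists_dist_le_hd {E : Type*} [NormedAddCommGroup E] {s t : Set E} {x : E} (hx : x ∈ s)
    (hsb : IsBounded s) (ht : IsCompact t) (htne : t.Nonempty) :
    ∃ y ∈ t, dist x y ≤ hausdorffDist s t := by
  obtain ⟨y, hy, hyd⟩ := ht.exists_infDist_eq_dist htne x
  exact ⟨y, hy, hyd ▸ infDist_le_hausdorffDist_of_mem hx
    (hausdorffEdist_ne_top_of_nonempty_of_bounded ⟨x, hx⟩ htne hsb ht.isBounded)⟩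

lemma hd_smul_le {E : Type*} [NormedAddCommGroup E] [NormedSpace ℝ E] {s t : Set E} (c : ℝ)
    (hs : IsCompact s) (hsne : s.Nonempty) (ht : IsCompact t) (htne : t.Nonempty) :
    hausdorffDist (c • s) (c • t) ≤ |c| * hausdorffDist s t := by
  have key : ∀ (s t : Set E), IsCompact s → s.Nonempty → IsCompact t → t.Nonempty →
      ∀ x ∈ c • s, ∃ y ∈ c • t, dist x y ≤ |c| * hausdorffDist s t := by
    intro s t hs hsne ht htne x hx
    obtain ⟨z, hz, rfl⟩ := hx
    obtain ⟨y, hy, hyd⟩ := exists_dist_le_hd hz hs.isBounded ht htne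
    refine ⟨c • y, Set.smul_mem_smul_set hy, ?_⟩
    rw [dist_smul₀]
    exact mul_le_mul_of_nonneg_left hyd (abs_nonneg c)
  refine hausdorffDist_le_of_mem_dist (mul_nonneg (abs_nonneg c) hausdorffDist_nonneg)
    (key s t hs hsne ht htne) ?_
  intro x hx
  obtain ⟨y, hy, hyd⟩ := key t s ht htne hs hsne x hx
  exact ⟨y, hy, by rwa [hausdorffDist_comm] at hyd⟩

lemma hd_smul_smul_le {E : Type*} [NormedAddCommGroup E] [NormedSpace ℝ E] {s : Set E}
    (c c' M : ℝ) (hM : 0 ≤ M) (hbd : ∀ x ∈ s, ‖x‖ ≤ M) :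
    hausdorffDist (c • s) (c' • s) ≤ |c - c'| * M := by
  have key : ∀ (a a' : ℝ), ∀ x ∈ a • s, ∃ y ∈ a' • s, dist x y ≤ |a - a'| * M := by
    intro a a' x hx
    obtain ⟨z, hz, rfl⟩ := hx
    refine ⟨a' • z, Set.smul_mem_smul_set hz, ?_⟩
    rw [dist_eq_norm, ← sub_smul, norm_smul, Real.norm_eq_abs]
    exact mul_le_mul_of_nonneg_left (hbd z hz) (abs_nonneg _)
  refine hausdorffDist_le_of_mem_dist (mul_nonneg (abs_nonneg _) hM) (key c c') ?_
  intro x hx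
  obtain ⟨y, hy, hyd⟩ := key c' c x hx
  exact ⟨y, hy, by rwa [abs_sub_comm] at hyd⟩

lemma seq_tendsto_zero {u ε : ℕ → ℝ} {a : ℝ} (hu : ∀ n, 0 ≤ u n) (ha0 : 0 ≤ a) (ha1 : a < 1)
    (hrec : ∀ᶠ n in atTop, u (n + 1) ≤ a * u n + ε n) (hε : Tendsto ε atTop (𝓝 0)) :
    Tendsto u atTop (𝓝 0) := by
  rw [Metric.tendsto_atTop]
  intro ζ hζ
  have hζ2 : 0 < (1 - a) * (ζ / 2) := mul_pos (by linarith) (by linarith)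
  obtain ⟨N, hN⟩ : ∃ N, ∀ n ≥ N, u (n + 1) ≤ a * u n + ε n ∧ ε n ≤ (1 - a) * (ζ / 2) := by
    have h2 := (hε.eventually (eventually_le_nhds hζ2)).and hrec
    obtain ⟨N, hN⟩ := h2.exists_forall_of_atTop
    exact ⟨N, fun n hn => ⟨(hN n hn).2, (hN n hn).1⟩⟩
  have key : ∀ k, u (N + k) ≤ a ^ k * u N + ζ / 2 := by
    intro k
    induction k with
    | zero => simpa using (le_add_of_nonneg_right (by positivity) : u N ≤ u N + ζ/2)
    | succ k ih =>
      have h1 := (hN (N + k) (Nat.le_add_right _ _)).1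
      have h2 := (hN (N + k) (Nat.le_add_right _ _)).2
      calc u (N + (k + 1)) = u ((N + k) + 1) := by ring_nf
        _ ≤ a * u (N + k) + ε (N + k) := h1
        _ ≤ a * (a ^ k * u N + ζ / 2) + (1 - a) * (ζ / 2) := by
            refine add_le_add (mul_le_mul_of_nonneg_left ih ha0) h2
        _ = a ^ (k + 1) * u N + (a * (ζ/2) + (1 - a) * (ζ/2)) := by ring
        _ = a ^ (k + 1) * u N + ζ / 2 := by ring
  have hpow : Tendsto (fun k => a ^ k * u N) atTop (𝓝 0) := by
    simpa using (tendsto_pow_atTop_nhds_zero_of_lt_one ha0 ha1).mul_const (u N)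
  obtain ⟨k₀, hk₀⟩ := (hpow.eventually
    (eventually_lt_nhds (show (0:ℝ) < ζ/2 by positivity))).exists_forall_of_atTop
  refine ⟨N + k₀, fun n hn => ?_⟩
  have hn' : n = N + (n - N) := by omega
  have hkey := key (n - N)
  rw [← hn'] at hkey
  have h3 : a ^ (n - N) * u N < ζ / 2 := hk₀ (n - N) (by omega)
  rw [Real.dist_eq, sub_zero, abs_of_nonneg (hu n)]
  linarith

variable {D p : ℕ} {A : Fin (p + 1) → EuclideanSpace ℝ (Fin D) →L[ℝ] EuclideanSpace ℝ (Fin D)}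
  {b : Fin (p + 1) → EuclideanSpace ℝ (Fin D)}
  {f : Fin (p + 1) → EuclideanSpace ℝ (Fin D) → EuclideanSpace ℝ (Fin D)}

lemma hutch_isCompact (hf : ∀ i x, f i x = A i x + b i) {K : Set (EuclideanSpace ℝ (Fin D))}
    (hK : IsCompact K) : IsCompact (hutch f K) := by
  refine isCompact_iUnion fun i => hK.image ?_
  have : f i = fun x => A i x + b i := funext (hf i)
  rw [this]
  exact ((A i).continuous).add continuous_const

lemma hutch_nonempty {K : Set (EuclideanSpace ℝ (Fin D))} (hK : K.Nonempty) :
    (hutch f K).Nonempty := by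
  obtain ⟨x, hx⟩ := hK
  exact ⟨f 0 x, Set.mem_iUnion.2 ⟨0, Set.mem_image_of_mem _ hx⟩⟩

lemma hd_hutch_le (hf : ∀ i x, f i x = A i x + b i) {lam : ℝ} (hlam : ∀ i, ‖A i‖ ≤ lam)
    (hlam0 : 0 ≤ lam) {s t : Set (EuclideanSpace ℝ (Fin D))} (hs : IsCompact s)
    (hsne : s.Nonempty) (ht : IsCompact t) (htne : t.Nonempty) :
    hausdorffDist (hutch f s) (hutch f t) ≤ lam * hausdorffDist s t := by
  have key : ∀ (s t : Set (EuclideanSpace ℝ (Fin D))), IsCompact s → s.Nonempty →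
      IsCompact t → t.Nonempty →
      ∀ x ∈ hutch f s, ∃ y ∈ hutch f t, dist x y ≤ lam * hausdorffDist s t := by
    intro s t hs hsne ht htne x hx
    obtain ⟨i, z, hz, rfl⟩ := by simpa [hutch] using hx
    obtain ⟨y, hy, hyd⟩ := exists_dist_le_hd hz hs.isBounded ht htne
    refine ⟨f i y, Set.mem_iUnion.2 ⟨i, Set.mem_image_of_mem _ hy⟩, ?_⟩
    rw [dist_eq_norm, hf, hf]
    have h4 : A i z + b i - (A i y + b i) = A i (z - y) := by rw [map_sub]; abel
    rw [h4]
    calc ‖A i (z - y)‖ ≤ ‖A i‖ * ‖z - y‖ := (A i).le_opNorm _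
      _ ≤ lam * hausdorffDist s t := by
          rw [← dist_eq_norm]
          exact mul_le_mul (hlam i) hyd dist_nonneg hlam0
  refine hausdorffDist_le_of_mem_dist (mul_nonneg hlam0 hausdorffDist_nonneg)
    (key s t hs hsne ht htne) ?_
  intro x hx
  obtain ⟨y, hy, hyd⟩ := key t s ht htne hs hsne x hx
  exact ⟨y, hy, by rwa [hausdorffDist_comm] at hyd⟩

lemma hutch_smul (hf : ∀ i x, f i x = A i x + b i) (hb : ∀ i, b i = 0) (c : ℝ)
    (K : Set (EuclideanSpace ℝ (Fin D))) : hutch f (c • K) = c • hutch f K := by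
  simp only [hutch, Set.smul_set_iUnion]
  refine Set.iUnion_congr fun i => ?_
  ext x
  simp only [Set.mem_image, Set.mem_smul_set]
  constructor
  · rintro ⟨y, ⟨z, hz, rfl⟩, rfl⟩
    exact ⟨f i z, ⟨z, hz, rfl⟩, by rw [hf, hf, hb, add_zero, add_zero, map_smul]⟩
  · rintro ⟨y, ⟨z, hz, rfl⟩, rfl⟩
    exact ⟨c • z, ⟨z, hz, rfl⟩, by rw [hf, hf, hb, add_zero, add_zero, map_smul]⟩

end auxiliaries

/-- Theorem `theo:cvgfhi`. Let `φ` be a size function (continuous for the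
Hausdorff metric, monotone and homogeneous, with values in `[0, ∞)`). Then:
(i) if the `φ`-normalizing sequence `(d_n)` converges to `d > λ_H`, the `φ`-renormalized orbit
converges to the attractor `L_d` and `φ({(d·Id − A_i)⁻¹ b_i}) ≤ 1`;
(ii) if all `b_i = 0` and `(H^n(K₀))_n` converges to a nonempty compact `L` with `φ(L) ≠ 0`,
then the `φ`-renormalized orbit converges to `(1/φ(L)) L`. -/
theorem stmt16 {D p : ℕ}
    (φ : Set (EuclideanSpace ℝ (Fin D)) → ℝ)
    (hφ0 : ∀ K : Set (EuclideanSpace ℝ (Fin D)), IsCompact K → K.Nonempty → 0 ≤ φ K)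
    (hφcont : ∀ (Ks : ℕ → Set (EuclideanSpace ℝ (Fin D)))
      (L : Set (EuclideanSpace ℝ (Fin D))),
      (∀ n, IsCompact (Ks n)) → (∀ n, (Ks n).Nonempty) → IsCompact L → L.Nonempty →
      Tendsto (fun n => hausdorffDist (Ks n) L) atTop (𝓝 0) →
      Tendsto (fun n => φ (Ks n)) atTop (𝓝 (φ L)))
    (hφmono : ∀ K K' : Set (EuclideanSpace ℝ (Fin D)), IsCompact K → K.Nonempty →
      IsCompact K' → K ⊆ K' → φ K ≤ φ K')
    (hφhom : ∀ (α : ℝ) (K : Set (EuclideanSpace ℝ (Fin D))), φ (α • K) = |α| * φ K)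
    (A : Fin (p + 1) → EuclideanSpace ℝ (Fin D) →L[ℝ] EuclideanSpace ℝ (Fin D))
    (b : Fin (p + 1) → EuclideanSpace ℝ (Fin D))
    (f : Fin (p + 1) → EuclideanSpace ℝ (Fin D) → EuclideanSpace ℝ (Fin D))
    (hf : ∀ i x, f i x = A i x + b i)
    (K₀ : Set (EuclideanSpace ℝ (Fin D))) (hK₀c : IsCompact K₀) (hK₀ne : K₀.Nonempty)
    (hpos : ∀ n, 0 < φ (hutch f ((hutchPhi φ f)^[n] K₀))) :
    (∀ d : ℝ, Tendsto (fun n => φ (hutch f ((hutchPhi φ f)^[n] K₀))) atTop (𝓝 d) →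
      Finset.univ.sup' Finset.univ_nonempty (fun i => ‖A i‖) < d →
      (∀ L : Set (EuclideanSpace ℝ (Fin D)), IsCompact L → L.Nonempty →
        d⁻¹ • hutch f L = L →
        Tendsto (fun n => hausdorffDist ((hutchPhi φ f)^[n] K₀) L) atTop (𝓝 0)) ∧
      φ {x | ∃ i, d • x - A i x = b i} ≤ 1) ∧
    ((∀ i, b i = 0) →
      ∀ L : Set (EuclideanSpace ℝ (Fin D)), IsCompact L → L.Nonempty → φ L ≠ 0 →
      Tendsto (fun n => hausdorffDist ((hutch f)^[n] K₀) L) atTop (𝓝 0) →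
      Tendsto (fun n => hausdorffDist ((hutchPhi φ f)^[n] K₀) ((φ L)⁻¹ • L))
        atTop (𝓝 0)) := by
  have hiter : ∀ n, (hutchPhi φ f)^[n+1] K₀
      = (φ (hutch f ((hutchPhi φ f)^[n] K₀)))⁻¹ • hutch f ((hutchPhi φ f)^[n] K₀) := by
    intro n; rw [Function.iterate_succ_apply']; rfl
  have hKcne : ∀ n, IsCompact ((hutchPhi φ f)^[n] K₀) ∧ ((hutchPhi φ f)^[n] K₀).Nonempty := by
    intro n
    induction n with
    | zero => exact ⟨hK₀c, hK₀ne⟩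
    | succ n ih =>
      rw [hiter]
      exact ⟨(hutch_isCompact hf ih.1).smul _, (hutch_nonempty ih.2).smul_set⟩
  constructor
  · intro d hdt hlamlt
    set lam := Finset.univ.sup' Finset.univ_nonempty (fun i => ‖A i‖) with hlam_def
    have hlam : ∀ i, ‖A i‖ ≤ lam := fun i => by
      rw [hlam_def]; exact Finset.le_sup' (fun j => ‖A j‖) (Finset.mem_univ i)
    have hlam0 : 0 ≤ lam := (norm_nonneg (A 0)).trans (hlam 0)
    have hd0 : 0 < d := hlam0.trans_lt hlamlt
    have hρ0 : 0 ≤ d⁻¹ * lam := mul_nonneg (inv_pos.2 hd0).le hlam0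
    have hρ1 : d⁻¹ * lam < 1 := by
      have h := (div_lt_one hd0).2 hlamlt
      rwa [div_eq_mul_inv, mul_comm] at h
    have main : ∀ L : Set (EuclideanSpace ℝ (Fin D)), IsCompact L → L.Nonempty →
        d⁻¹ • hutch f L = L →
        Tendsto (fun n => hausdorffDist ((hutchPhi φ f)^[n] K₀) L) atTop (𝓝 0) := by
      intro L hLc hLne hfix
      have hHL : hutch f L = d • L := by
        conv_lhs => rw [← smul_inv_smul₀ (ne_of_gt hd0) (hutch f L)]
        rw [hfix]
      obtain ⟨M0, hM0⟩ := hLc.isBounded.exists_norm_le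
      set M := max M0 0 with hMdef
      have hM : ∀ x ∈ L, ‖x‖ ≤ M := fun x hx => (hM0 x hx).trans (le_max_left _ _)
      have hMnn : 0 ≤ M := le_max_right _ _
      have hu0 : ∀ n : ℕ, 0 ≤ hausdorffDist ((hutchPhi φ f)^[n] K₀) L :=
        fun n => hausdorffDist_nonneg
      have hHb : ∀ n, ∀ x ∈ hutch f ((hutchPhi φ f)^[n] K₀),
          ‖x‖ ≤ d * M + lam * hausdorffDist ((hutchPhi φ f)^[n] K₀) L := by
        intro n x hx
        obtain ⟨y, hy, hyd⟩ := exists_dist_le_hd hx (hutch_isCompact hf (hKcne n).1).isBounded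
          (hutch_isCompact hf hLc) (hutch_nonempty hLne)
        have h1 : dist x y ≤ lam * hausdorffDist ((hutchPhi φ f)^[n] K₀) L :=
          hyd.trans (hd_hutch_le hf hlam hlam0 (hKcne n).1 (hKcne n).2 hLc hLne)
        rw [hHL] at hy
        obtain ⟨z, hz, rfl⟩ := hy
        have h2 : ‖d • z‖ ≤ d * M := by
          rw [norm_smul, Real.norm_eq_abs, abs_of_pos hd0]
          exact mul_le_mul_of_nonneg_left (hM z hz) hd0.le
        have h3 : ‖x‖ - ‖d • z‖ ≤ dist x (d • z) := by
          rw [dist_eq_norm]; exact norm_sub_norm_le _ _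
        linarith
      have hrec : ∀ n, hausdorffDist ((hutchPhi φ f)^[n+1] K₀) L ≤
          (d⁻¹ * lam) * hausdorffDist ((hutchPhi φ f)^[n] K₀) L +
          |(φ (hutch f ((hutchPhi φ f)^[n] K₀)))⁻¹ - d⁻¹| *
            (d * M + lam * hausdorffDist ((hutchPhi φ f)^[n] K₀) L) := by
        intro n
        have hc1 : IsCompact (hutch f ((hutchPhi φ f)^[n] K₀)) := hutch_isCompact hf (hKcne n).1
        have hne1 : (hutch f ((hutchPhi φ f)^[n] K₀)).Nonempty := hutch_nonempty (hKcne n).2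
        have tri : hausdorffDist ((hutchPhi φ f)^[n+1] K₀) L ≤
            hausdorffDist ((hutchPhi φ f)^[n+1] K₀) (d⁻¹ • hutch f ((hutchPhi φ f)^[n] K₀)) +
            hausdorffDist (d⁻¹ • hutch f ((hutchPhi φ f)^[n] K₀)) L := by
          refine hausdorffDist_triangle ?_
          rw [hiter]
          exact hausdorffEdist_ne_top_of_nonempty_of_bounded hne1.smul_set hne1.smul_set
            ((hc1.smul _).isBounded) ((hc1.smul _).isBounded)
        have t1 : hausdorffDist ((hutchPhi φ f)^[n+1] K₀)
              (d⁻¹ • hutch f ((hutchPhi φ f)^[n] K₀))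
            ≤ |(φ (hutch f ((hutchPhi φ f)^[n] K₀)))⁻¹ - d⁻¹| *
              (d * M + lam * hausdorffDist ((hutchPhi φ f)^[n] K₀) L) := by
          rw [hiter]
          exact hd_smul_smul_le _ _ _
            (add_nonneg (mul_nonneg hd0.le hMnn) (mul_nonneg hlam0 (hu0 n))) (hHb n)
        have t2 : hausdorffDist (d⁻¹ • hutch f ((hutchPhi φ f)^[n] K₀)) L ≤
            (d⁻¹ * lam) * hausdorffDist ((hutchPhi φ f)^[n] K₀) L := by
          conv_lhs => rw [← hfix]
          calc hausdorffDist (d⁻¹ • hutch f ((hutchPhi φ f)^[n] K₀)) (d⁻¹ • hutch f L)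
              ≤ |d⁻¹| * hausdorffDist (hutch f ((hutchPhi φ f)^[n] K₀)) (hutch f L) :=
                hd_smul_le _ hc1 hne1 (hutch_isCompact hf hLc) (hutch_nonempty hLne)
            _ ≤ |d⁻¹| * (lam * hausdorffDist ((hutchPhi φ f)^[n] K₀) L) :=
                mul_le_mul_of_nonneg_left
                  (hd_hutch_le hf hlam hlam0 (hKcne n).1 (hKcne n).2 hLc hLne) (abs_nonneg _)
            _ = (d⁻¹ * lam) * hausdorffDist ((hutchPhi φ f)^[n] K₀) L := by
                rw [abs_of_pos (inv_pos.2 hd0)]; ring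
        linarith
      have hδ : Tendsto (fun n => |(φ (hutch f ((hutchPhi φ f)^[n] K₀)))⁻¹ - d⁻¹|)
          atTop (𝓝 0) := by
        have h := ((hdt.inv₀ (ne_of_gt hd0)).sub (tendsto_const_nhds (x := d⁻¹))).abs
        simpa using h
      have hδ' : Tendsto (fun n => lam * |(φ (hutch f ((hutchPhi φ f)^[n] K₀)))⁻¹ - d⁻¹|)
          atTop (𝓝 0) := by simpa using hδ.const_mul lam
      have hev : ∀ᶠ n in atTop,
          hausdorffDist ((hutchPhi φ f)^[n+1] K₀) L ≤
          ((1 + d⁻¹ * lam)/2) * hausdorffDist ((hutchPhi φ f)^[n] K₀) L +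
          |(φ (hutch f ((hutchPhi φ f)^[n] K₀)))⁻¹ - d⁻¹| * (d * M) := by
        filter_upwards [hδ'.eventually (eventually_le_nhds (by linarith :
          (0:ℝ) < (1 - d⁻¹ * lam)/2))] with n hn
        have h1 := hrec n
        have h2 : (lam * |(φ (hutch f ((hutchPhi φ f)^[n] K₀)))⁻¹ - d⁻¹|) *
            hausdorffDist ((hutchPhi φ f)^[n] K₀) L ≤
            ((1 - d⁻¹ * lam)/2) * hausdorffDist ((hutchPhi φ f)^[n] K₀) L :=
          mul_le_mul_of_nonneg_right hn (hu0 n)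
        nlinarith [hu0 n, abs_nonneg ((φ (hutch f ((hutchPhi φ f)^[n] K₀)))⁻¹ - d⁻¹)]
      have hε : Tendsto (fun n =>
          |(φ (hutch f ((hutchPhi φ f)^[n] K₀)))⁻¹ - d⁻¹| * (d * M)) atTop (𝓝 0) := by
        simpa using hδ.mul_const (d * M)
      exact seq_tendsto_zero hu0 (by linarith) (by linarith) hev hε
    refine ⟨main, ?_⟩
    -- contraction of each renormalized map
    set ρ : NNReal := Real.toNNReal (d⁻¹ * lam) with hρdef
    have hρcoe : (ρ : ℝ) = d⁻¹ * lam := Real.coe_toNNReal _ hρ0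
    have hρlt : ρ < 1 := by
      rw [← NNReal.coe_lt_coe, hρcoe, NNReal.coe_one]; exact hρ1
    have hglip : ∀ i, ContractingWith ρ (fun x => d⁻¹ • f i x) := by
      intro i
      refine ⟨hρlt, LipschitzWith.of_dist_le_mul fun x y => ?_⟩
      rw [hρcoe, dist_smul₀, Real.norm_eq_abs, abs_of_pos (inv_pos.2 hd0)]
      have h1 : dist (f i x) (f i y) ≤ lam * dist x y := by
        rw [dist_eq_norm, hf, hf]
        have h4 : A i x + b i - (A i y + b i) = A i (x - y) := by rw [map_sub]; abel
        rw [h4, dist_eq_norm]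
        calc ‖A i (x - y)‖ ≤ ‖A i‖ * ‖x - y‖ := (A i).le_opNorm _
          _ ≤ lam * ‖x - y‖ := mul_le_mul_of_nonneg_right (hlam i) (norm_nonneg _)
      calc d⁻¹ * dist (f i x) (f i y) ≤ d⁻¹ * (lam * dist x y) :=
            mul_le_mul_of_nonneg_left h1 (inv_pos.2 hd0).le
        _ = d⁻¹ * lam * dist x y := by ring
    have hfp_iff : ∀ (i : Fin (p+1)) (x : EuclideanSpace ℝ (Fin D)),
        d • x - A i x = b i ↔ Function.IsFixedPt (fun y => d⁻¹ • f i y) x := by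
      intro i x
      constructor
      · intro hx
        show d⁻¹ • f i x = x
        rw [hf]
        have h5 : A i x + b i = d • x := by rw [← hx]; abel
        rw [h5, inv_smul_smul₀ (ne_of_gt hd0)]
      · intro hx
        have h5 : d⁻¹ • f i x = x := hx
        have h6 : f i x = d • x := by
          calc f i x = d • (d⁻¹ • f i x) := (smul_inv_smul₀ (ne_of_gt hd0) _).symm
            _ = d • x := by rw [h5]
        rw [hf] at h6
        rw [← h6]; abel
    -- the attractor
    set T : TopologicalSpace.NonemptyCompacts (EuclideanSpace ℝ (Fin D)) →
        TopologicalSpace.NonemptyCompacts (EuclideanSpace ℝ (Fin D)) :=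
      fun K => ⟨⟨d⁻¹ • hutch f (K : Set (EuclideanSpace ℝ (Fin D))),
        (hutch_isCompact hf K.isCompact).smul _⟩,
        (hutch_nonempty K.nonempty).smul_set⟩ with hTdef
    have hT : ContractingWith ρ T := by
      refine ⟨hρlt, LipschitzWith.of_dist_le_mul fun s t => ?_⟩
      rw [hρcoe, Metric.NonemptyCompacts.dist_eq, Metric.NonemptyCompacts.dist_eq]
      show hausdorffDist (d⁻¹ • hutch f (s : Set (EuclideanSpace ℝ (Fin D)))) (d⁻¹ • hutch f (t : Set (EuclideanSpace ℝ (Fin D)))) ≤ _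
      calc hausdorffDist (d⁻¹ • hutch f (s : Set (EuclideanSpace ℝ (Fin D)))) (d⁻¹ • hutch f (t : Set (EuclideanSpace ℝ (Fin D))))
          ≤ |d⁻¹| * hausdorffDist (hutch f (s : Set (EuclideanSpace ℝ (Fin D)))) (hutch f (t : Set (EuclideanSpace ℝ (Fin D)))) :=
            hd_smul_le _ (hutch_isCompact hf s.isCompact) (hutch_nonempty s.nonempty)
              (hutch_isCompact hf t.isCompact) (hutch_nonempty t.nonempty)
        _ ≤ |d⁻¹| * (lam * hausdorffDist (s : Set (EuclideanSpace ℝ (Fin D))) (t : Set (EuclideanSpace ℝ (Fin D)))) :=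
            mul_le_mul_of_nonneg_left
              (hd_hutch_le hf hlam hlam0 s.isCompact s.nonempty t.isCompact t.nonempty)
              (abs_nonneg _)
        _ = d⁻¹ * lam * hausdorffDist (s : Set (EuclideanSpace ℝ (Fin D))) (t : Set (EuclideanSpace ℝ (Fin D))) := by
            rw [abs_of_pos (inv_pos.2 hd0)]; ring
    set L' := ContractingWith.fixedPoint T hT with hL'def
    have hfixL : T L' = L' := hT.fixedPoint_isFixedPt
    have hfix' : d⁻¹ • hutch f (L' : Set (EuclideanSpace ℝ (Fin D))) =
        (L' : Set (EuclideanSpace ℝ (Fin D))) :=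
      congrArg (fun K : TopologicalSpace.NonemptyCompacts (EuclideanSpace ℝ (Fin D)) =>
        (K : Set (EuclideanSpace ℝ (Fin D)))) hfixL
    have hconvL := main (L' : Set _) L'.isCompact L'.nonempty hfix'
    -- φ L' = 1
    have hone : ∀ n, φ ((hutchPhi φ f)^[n+1] K₀) = 1 := by
      intro n
      rw [hiter, hφhom, abs_of_pos (inv_pos.2 (hpos n)), inv_mul_cancel₀ (ne_of_gt (hpos n))]
    have hφtend := hφcont (fun n => (hutchPhi φ f)^[n] K₀) (L' : Set _)
      (fun n => (hKcne n).1) (fun n => (hKcne n).2) L'.isCompact L'.nonempty hconvL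
    have h1t : Tendsto (fun n => φ ((hutchPhi φ f)^[n] K₀)) atTop (𝓝 1) := by
      refine Tendsto.congr' ?_ tendsto_const_nhds
      filter_upwards [eventually_ge_atTop 1] with n hn
      obtain ⟨m, rfl⟩ : ∃ m, n = m + 1 := ⟨n - 1, by omega⟩
      exact (hone m).symm
    have hφL' : φ (L' : Set _) = 1 := tendsto_nhds_unique hφtend h1t
    -- fixed points lie in L'
    have hSsub : {x | ∃ i, d • x - A i x = b i} ⊆ (L' : Set _) := by
      rintro x ⟨i, hx⟩
      have hfp := (hfp_iff i x).1 hx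
      obtain ⟨y₀, hy₀⟩ := L'.nonempty
      have hinv : ∀ n, (fun y => d⁻¹ • f i y)^[n] y₀ ∈ (L' : Set _) := by
        intro n
        induction n with
        | zero => simpa using hy₀
        | succ n ih =>
          rw [Function.iterate_succ_apply', ← hfix']
          exact Set.smul_mem_smul_set (Set.mem_iUnion.2 ⟨i, Set.mem_image_of_mem _ ih⟩)
      have htend := (hglip i).tendsto_iterate_fixedPoint y₀
      rw [(hglip i).fixedPoint_unique hfp]
      exact L'.isCompact.isClosed.mem_of_tendsto htend (Eventually.of_forall hinv)
    have hSfin : {x | ∃ i, d • x - A i x = b i}.Finite := by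
      apply (Set.finite_range
        (fun i : Fin (p+1) => ContractingWith.fixedPoint _ (hglip i))).subset
      rintro x ⟨i, hx⟩
      exact ⟨i, ((hglip i).fixedPoint_unique ((hfp_iff i x).1 hx)).symm⟩
    have hSne : {x | ∃ i, d • x - A i x = b i}.Nonempty := by
      refine ⟨ContractingWith.fixedPoint _ (hglip 0), 0, ?_⟩
      exact (hfp_iff 0 _).2 (hglip 0).fixedPoint_isFixedPt
    calc φ {x | ∃ i, d • x - A i x = b i} ≤ φ (L' : Set _) :=
          hφmono _ _ hSfin.isCompact hSne L'.isCompact hSsub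
      _ = 1 := hφL'
  · intro hb L hLc hLne hφL hconv
    have hScne : ∀ n, IsCompact ((hutch f)^[n] K₀) ∧ ((hutch f)^[n] K₀).Nonempty := by
      intro n
      induction n with
      | zero => exact ⟨hK₀c, hK₀ne⟩
      | succ n ih =>
        rw [Function.iterate_succ_apply']
        exact ⟨hutch_isCompact hf ih.1, hutch_nonempty ih.2⟩
    have claim : ∀ n, 0 < φ ((hutch f)^[n+1] K₀) ∧
        (hutchPhi φ f)^[n+1] K₀ = (φ ((hutch f)^[n+1] K₀))⁻¹ • (hutch f)^[n+1] K₀ := by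
      intro n
      induction n with
      | zero =>
        constructor
        · simpa using hpos 0
        · rw [hiter 0]
          simp
      | succ n ih =>
        have hc := ih.1
        have hKn1 : hutch f ((hutchPhi φ f)^[n+1] K₀)
            = (φ ((hutch f)^[n+1] K₀))⁻¹ • (hutch f)^[n+1+1] K₀ := by
          rw [ih.2, hutch_smul hf hb, ← Function.iterate_succ_apply' (hutch f)]
        have hphi : φ (hutch f ((hutchPhi φ f)^[n+1] K₀))
            = (φ ((hutch f)^[n+1] K₀))⁻¹ * φ ((hutch f)^[n+1+1] K₀) := by
          rw [hKn1, hφhom, abs_of_pos (inv_pos.2 hc)]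
        have hpos2 : 0 < φ ((hutch f)^[n+1+1] K₀) := by
          have hp := hpos (n+1)
          rw [hphi] at hp
          rcases mul_pos_iff.1 hp with ⟨_, h2⟩ | ⟨h1, _⟩
          · exact h2
          · exact absurd h1 (not_lt.2 (inv_nonneg.2 hc.le))
        refine ⟨hpos2, ?_⟩
        rw [hiter (n+1), hphi, hKn1, smul_smul]
        congr 1
        have hc' : φ ((hutch f)^[n] (hutch f K₀)) ≠ 0 := ne_of_gt hc
        have ht' : φ ((hutch f)^[n] (hutch f (hutch f K₀))) ≠ 0 := ne_of_gt hpos2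
        field_simp
    have hφt := hφcont (fun n => (hutch f)^[n] K₀) L (fun n => (hScne n).1)
      (fun n => (hScne n).2) hLc hLne hconv
    have hti : Tendsto (fun n => (φ ((hutch f)^[n] K₀))⁻¹) atTop (𝓝 (φ L)⁻¹) :=
      hφt.inv₀ hφL
    obtain ⟨M0, hM0⟩ := hLc.isBounded.exists_norm_le
    set M := max M0 0 with hMdef
    have hM : ∀ x ∈ L, ‖x‖ ≤ M := fun x hx => (hM0 x hx).trans (le_max_left _ _)
    have hMnn : 0 ≤ M := le_max_right _ _
    have hg0 : Tendsto (fun n => |(φ ((hutch f)^[n] K₀))⁻¹| *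
        hausdorffDist ((hutch f)^[n] K₀) L +
        |(φ ((hutch f)^[n] K₀))⁻¹ - (φ L)⁻¹| * M) atTop (𝓝 0) := by
      have h1 : Tendsto (fun n => |(φ ((hutch f)^[n] K₀))⁻¹| *
          hausdorffDist ((hutch f)^[n] K₀) L) atTop (𝓝 (|(φ L)⁻¹| * 0)) :=
        hti.abs.mul hconv
      have h2 : Tendsto (fun n => |(φ ((hutch f)^[n] K₀))⁻¹ - (φ L)⁻¹| * M)
          atTop (𝓝 (|(φ L)⁻¹ - (φ L)⁻¹| * M)) :=
        ((hti.sub tendsto_const_nhds).abs).mul_const M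
      have h3 := h1.add h2
      simpa using h3
    refine squeeze_zero' (Eventually.of_forall fun n => hausdorffDist_nonneg) ?_ hg0
    filter_upwards [eventually_ge_atTop 1] with n hn
    obtain ⟨m, rfl⟩ : ∃ m, n = m + 1 := ⟨n - 1, by omega⟩
    rw [(claim m).2]
    have hSc := (hScne (m+1)).1
    have hSne := (hScne (m+1)).2
    set c := (φ ((hutch f)^[m+1] K₀))⁻¹ with hcdef
    have tri : hausdorffDist (c • (hutch f)^[m+1] K₀) ((φ L)⁻¹ • L) ≤
        hausdorffDist (c • (hutch f)^[m+1] K₀) (c • L) +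
        hausdorffDist (c • L) ((φ L)⁻¹ • L) := by
      refine hausdorffDist_triangle ?_
      exact hausdorffEdist_ne_top_of_nonempty_of_bounded hSne.smul_set hLne.smul_set
        ((hSc.smul _).isBounded) ((hLc.smul _).isBounded)
    have t1 : hausdorffDist (c • (hutch f)^[m+1] K₀) (c • L) ≤
        |c| * hausdorffDist ((hutch f)^[m+1] K₀) L :=
      hd_smul_le _ hSc hSne hLc hLne
    have t2 : hausdorffDist (c • L) ((φ L)⁻¹ • L) ≤ |c - (φ L)⁻¹| * M :=
      hd_smul_smul_le _ _ _ hMnn hM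
    calc hausdorffDist (c • (hutch f)^[m+1] K₀) ((φ L)⁻¹ • L)
        ≤ |c| * hausdorffDist ((hutch f)^[m+1] K₀) L + |c - (φ L)⁻¹| * M := by linarith
      _ = _ := rfl
end
end

section
/- Let p ≥ 1 affine maps f_i : ℝ → ℝ of the form f_i(x) = α_i x + b_i with α_i ≥ 0, and define F(x) = (min_{1≤i≤p}(α_i x + b_i)) / (max_{1≤i≤p}(α_i(x+1) + b_i) − min_{1≤i≤p}(α_i x + b_i)). Let K_0 be a nonempty compact subset of ℝ and consider the renormalized orbit with respect to the diameter function δ, with normalizing sequence (d_n)_n. Assume the sequence (F^n(u))_n starting at u = min(H_δ(K_0)) converges to a number c ∈ ℝ. Then: (i) (d_n)_n converges to d = max_{1≤i≤p}(α_i(c+1) + b_i) − min_{1≤i≤p}(α_i c + b_i); (ii) if d > max_{1≤i≤p} α_i, then (H_δ^n(K_0))_n converges in the Hausdorff metric to the attractor L_d of the IFS {f_1/d, …, f_p/d}, whose convex hull is the interval [c, c+1]. -/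
open Metric Filter Pointwise Topology

noncomputable section

/-- The Hutchinson operator on `ℝ`: `H(K) = ⋃ i, f i '' K`. -/
def hutchR {p : ℕ} (f : Fin (p + 1) → ℝ → ℝ) (K : Set ℝ) : Set ℝ := ⋃ i, f i '' K

/-- The `δ`-renormalized Hutchinson operator `H_δ(K) = δ(H(K))⁻¹ • H(K)`, where `δ` is the
diameter. -/
def hutchDiam {p : ℕ} (f : Fin (p + 1) → ℝ → ℝ) (K : Set ℝ) : Set ℝ :=
  (Metric.diam (hutchR f K))⁻¹ • hutchR f K


lemma aux_tendsto_zero {a e : ℕ → ℝ} {r : ℝ} (hr0 : 0 ≤ r) (hr1 : r < 1)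
    (ha : ∀ n, 0 ≤ a n) (hrec : ∀ n, a (n + 1) ≤ r * a n + e n)
    (he : Tendsto e atTop (𝓝 0)) : Tendsto a atTop (𝓝 0) := by
  rw [Metric.tendsto_atTop]
  intro δ hδ
  have h1r : 0 < 1 - r := by linarith
  have hδ' : 0 < δ * (1 - r) / 2 := by positivity
  obtain ⟨N, hN⟩ := (Metric.tendsto_atTop.1 he) (δ * (1 - r) / 2) hδ'
  have key : ∀ k, a (N + k) ≤ r ^ k * a N + δ / 2 := by
    intro k
    induction k with
    | zero => simp; linarith [ha N]
    | succ k ih =>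
      have h2 : e (N + k) ≤ δ * (1 - r) / 2 := by
        have := hN (N + k) (Nat.le_add_right _ _)
        rw [Real.dist_eq, sub_zero] at this
        exact (le_abs_self _).trans this.le
      have h3 : a (N + (k + 1)) ≤ r * (r ^ k * a N + δ / 2) + δ * (1 - r) / 2 := by
        have h4 := hrec (N + k)
        have h5 := mul_le_mul_of_nonneg_left ih hr0
        have : N + (k + 1) = (N + k) + 1 := by omega
        rw [this]
        linarith
      calc a (N + (k + 1)) ≤ r * (r ^ k * a N + δ / 2) + δ * (1 - r) / 2 := h3
      _ = r ^ (k + 1) * a N + δ / 2 := by rw [pow_succ]; ring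
  obtain ⟨M, hM⟩ := (Metric.tendsto_atTop.1
    ((tendsto_pow_atTop_nhds_zero_of_lt_one hr0 hr1).mul_const (a N))) (δ / 2) (by positivity)
  refine ⟨N + M, fun n hn => ?_⟩
  have h1 : a n ≤ r ^ (n - N) * a N + δ / 2 := by
    have := key (n - N)
    rwa [Nat.add_sub_cancel' (le_trans (Nat.le_add_right N M) hn)] at this
  have h2 := hM (n - N) (by omega)
  rw [Real.dist_eq, zero_mul, sub_zero] at h2
  rw [Real.dist_eq, sub_zero, abs_of_nonneg (ha n)]
  have h6 := le_abs_self (r ^ (n - N) * a N)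
  linarith

lemma aux_inf'_le {p : ℕ} (g h : Fin (p + 1) → ℝ) {C : ℝ}
    (hC : ∀ i, g i ≤ h i + C) :
    Finset.univ.inf' Finset.univ_nonempty g ≤ Finset.univ.inf' Finset.univ_nonempty h + C := by
  obtain ⟨i, -, hi⟩ := Finset.exists_mem_eq_inf' Finset.univ_nonempty h
  rw [hi]
  exact le_trans (Finset.inf'_le _ (Finset.mem_univ i)) (hC i)

lemma aux_abs_inf'_sub {p : ℕ} (g h : Fin (p + 1) → ℝ) {C : ℝ}
    (hC : ∀ i, |g i - h i| ≤ C) :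
    |Finset.univ.inf' Finset.univ_nonempty g - Finset.univ.inf' Finset.univ_nonempty h| ≤ C := by
  rw [abs_sub_le_iff]
  constructor
  · have := aux_inf'_le g h (fun i => by have := (abs_le.1 (hC i)).2; linarith)
    linarith
  · have := aux_inf'_le h g (fun i => by have := (abs_le.1 (hC i)).1; linarith)
    linarith

lemma aux_sup'_le {p : ℕ} (g h : Fin (p + 1) → ℝ) {C : ℝ}
    (hC : ∀ i, g i ≤ h i + C) :
    Finset.univ.sup' Finset.univ_nonempty g ≤ Finset.univ.sup' Finset.univ_nonempty h + C := by
  obtain ⟨i, -, hi⟩ := Finset.exists_mem_eq_sup' Finset.univ_nonempty g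
  rw [hi]
  exact le_trans (hC i) (by have := Finset.le_sup' h (Finset.mem_univ i); linarith)

lemma aux_abs_sup'_sub {p : ℕ} (g h : Fin (p + 1) → ℝ) {C : ℝ}
    (hC : ∀ i, |g i - h i| ≤ C) :
    |Finset.univ.sup' Finset.univ_nonempty g - Finset.univ.sup' Finset.univ_nonempty h| ≤ C := by
  rw [abs_sub_le_iff]
  constructor
  · have := aux_sup'_le g h (fun i => by have := (abs_le.1 (hC i)).2; linarith)
    linarith
  · have := aux_sup'_le h g (fun i => by have := (abs_le.1 (hC i)).1; linarith)
    linarith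

lemma hutchR_isCompact {p : ℕ} {α b : Fin (p + 1) → ℝ} {f : Fin (p + 1) → ℝ → ℝ}
    (hf : ∀ i x, f i x = α i * x + b i) {K : Set ℝ} (hK : IsCompact K) :
    IsCompact (hutchR f K) := by
  refine isCompact_iUnion fun i => hK.image ?_
  have : f i = fun x => α i * x + b i := funext (hf i)
  rw [this]
  fun_prop

lemma hutchR_nonempty {p : ℕ} (f : Fin (p + 1) → ℝ → ℝ) {K : Set ℝ} (hK : K.Nonempty) :
    (hutchR f K).Nonempty :=
  ⟨f 0 hK.some, Set.mem_iUnion.2 ⟨0, Set.mem_image_of_mem _ hK.some_mem⟩⟩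

lemma hutchR_isLeast {p : ℕ} {α b : Fin (p + 1) → ℝ} {f : Fin (p + 1) → ℝ → ℝ}
    (hα : ∀ i, 0 ≤ α i) (hf : ∀ i x, f i x = α i * x + b i) {K : Set ℝ}
    (hK : IsCompact K) (hKne : K.Nonempty) :
    IsLeast (hutchR f K)
      (Finset.univ.inf' Finset.univ_nonempty fun i => α i * sInf K + b i) := by
  constructor
  · obtain ⟨i, -, hi⟩ :=
      Finset.exists_mem_eq_inf' Finset.univ_nonempty (fun i => α i * sInf K + b i)
    rw [hi]
    exact Set.mem_iUnion.2 ⟨i, ⟨sInf K, hK.sInf_mem hKne, hf i _⟩⟩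
  · rintro y hy
    obtain ⟨i, hy⟩ := Set.mem_iUnion.1 hy
    obtain ⟨x, hx, rfl⟩ := hy
    have h1 : sInf K ≤ x := csInf_le hK.bddBelow hx
    have h2 : α i * sInf K + b i ≤ f i x := by
      rw [hf]
      have := mul_le_mul_of_nonneg_left h1 (hα i)
      linarith
    exact le_trans (Finset.inf'_le _ (Finset.mem_univ i)) h2

lemma hutchR_isGreatest {p : ℕ} {α b : Fin (p + 1) → ℝ} {f : Fin (p + 1) → ℝ → ℝ}
    (hα : ∀ i, 0 ≤ α i) (hf : ∀ i x, f i x = α i * x + b i) {K : Set ℝ}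
    (hK : IsCompact K) (hKne : K.Nonempty) :
    IsGreatest (hutchR f K)
      (Finset.univ.sup' Finset.univ_nonempty fun i => α i * sSup K + b i) := by
  constructor
  · obtain ⟨i, -, hi⟩ :=
      Finset.exists_mem_eq_sup' Finset.univ_nonempty (fun i => α i * sSup K + b i)
    rw [hi]
    exact Set.mem_iUnion.2 ⟨i, ⟨sSup K, hK.sSup_mem hKne, hf i _⟩⟩
  · rintro y hy
    obtain ⟨i, hy⟩ := Set.mem_iUnion.1 hy
    obtain ⟨x, hx, rfl⟩ := hy
    have h1 : x ≤ sSup K := le_csSup hK.bddAbove hx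
    have h2 : f i x ≤ α i * sSup K + b i := by
      rw [hf]
      have := mul_le_mul_of_nonneg_left h1 (hα i)
      linarith
    exact le_trans h2 (Finset.le_sup' (fun i => α i * sSup K + b i) (Finset.mem_univ i))

lemma hutchR_diam {p : ℕ} {α b : Fin (p + 1) → ℝ} {f : Fin (p + 1) → ℝ → ℝ}
    (hα : ∀ i, 0 ≤ α i) (hf : ∀ i x, f i x = α i * x + b i) {K : Set ℝ}
    (hK : IsCompact K) (hKne : K.Nonempty) :
    Metric.diam (hutchR f K) =
      (Finset.univ.sup' Finset.univ_nonempty fun i => α i * sSup K + b i) -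
      (Finset.univ.inf' Finset.univ_nonempty fun i => α i * sInf K + b i) := by
  rw [Real.diam_eq (hutchR_isCompact hf hK).isBounded,
    (hutchR_isGreatest hα hf hK hKne).csSup_eq, (hutchR_isLeast hα hf hK hKne).csInf_eq]

lemma diam_smul_real {t : ℝ} (ht : 0 ≤ t) {S : Set ℝ} (hS : IsCompact S) (hSne : S.Nonempty) :
    Metric.diam (t • S) = t * Metric.diam S := by
  rw [Real.diam_eq (hS.smul t).isBounded, Real.sSup_smul_of_nonneg ht,
    Real.sInf_smul_of_nonneg ht, Real.diam_eq hS.isBounded, smul_eq_mul, smul_eq_mul]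
  ring

lemma haus_smul_le {s t C : ℝ} {A : Set ℝ} (hA : A.Nonempty) (hC : ∀ x ∈ A, |x| ≤ C) :
    hausdorffDist (s • A) (t • A) ≤ |s - t| * C := by
  have hC0 : 0 ≤ C := le_trans (abs_nonneg _) (hC _ hA.some_mem)
  have h0 : 0 ≤ |s - t| * C := mul_nonneg (abs_nonneg _) hC0
  have key : ∀ a ∈ A, dist (s • a) (t • a) ≤ |s - t| * C := by
    intro a ha
    rw [smul_eq_mul, smul_eq_mul, Real.dist_eq]
    have : s * a - t * a = (s - t) * a := by ring
    rw [this, abs_mul]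
    exact mul_le_mul_of_nonneg_left (hC a ha) (abs_nonneg _)
  apply hausdorffDist_le_of_mem_dist h0
  · rintro x hx
    obtain ⟨a, ha, rfl⟩ := hx
    exact ⟨t • a, Set.smul_mem_smul_set ha, key a ha⟩
  · rintro x hx
    obtain ⟨a, ha, rfl⟩ := hx
    exact ⟨s • a, Set.smul_mem_smul_set ha, by rw [dist_comm]; exact key a ha⟩

lemma haus_hutch_le {p : ℕ} {f : Fin (p + 1) → ℝ → ℝ} {r : ℝ} (hr : 0 ≤ r)
    (hlip : ∀ i x y, dist (f i x) (f i y) ≤ r * dist x y)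
    {A B : Set ℝ} (hA : IsCompact A) (hAne : A.Nonempty) (hB : IsCompact B)
    (hBne : B.Nonempty) :
    hausdorffDist (hutchR f A) (hutchR f B) ≤ r * hausdorffDist A B := by
  have hfin : EMetric.hausdorffEdist A B ≠ ⊤ :=
    hausdorffEdist_ne_top_of_nonempty_of_bounded hAne hBne hA.isBounded hB.isBounded
  have hfin' : EMetric.hausdorffEdist B A ≠ ⊤ := by unfold EMetric.hausdorffEdist at hfin ⊢; rwa [hausdorffEDist_comm]
  have h0 : 0 ≤ r * hausdorffDist A B := mul_nonneg hr hausdorffDist_nonneg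
  apply hausdorffDist_le_of_mem_dist h0
  · rintro x hx
    obtain ⟨i, hx⟩ := Set.mem_iUnion.1 hx
    obtain ⟨a, ha, rfl⟩ := hx
    obtain ⟨y, hy, hdy⟩ := hB.exists_infDist_eq_dist hBne a
    refine ⟨f i y, Set.mem_iUnion.2 ⟨i, Set.mem_image_of_mem _ hy⟩, ?_⟩
    calc dist (f i a) (f i y) ≤ r * dist a y := hlip i a y
    _ ≤ r * hausdorffDist A B := by
        refine mul_le_mul_of_nonneg_left ?_ hr
        rw [← hdy]
        exact infDist_le_hausdorffDist_of_mem ha hfin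
  · rintro x hx
    obtain ⟨i, hx⟩ := Set.mem_iUnion.1 hx
    obtain ⟨a, ha, rfl⟩ := hx
    obtain ⟨y, hy, hdy⟩ := hA.exists_infDist_eq_dist hAne a
    refine ⟨f i y, Set.mem_iUnion.2 ⟨i, Set.mem_image_of_mem _ hy⟩, ?_⟩
    calc dist (f i a) (f i y) ≤ r * dist a y := hlip i a y
    _ ≤ r * hausdorffDist A B := by
        refine mul_le_mul_of_nonneg_left ?_ hr
        rw [← hdy]
        rw [hausdorffDist_comm]
        exact infDist_le_hausdorffDist_of_mem ha hfin'

/-- Proposition `prop:diamD1`. For affine maps `f_i(x) = α_i x + b_i` on `ℝ`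
with `α_i ≥ 0`, let `F(x) = min_i(α_i x + b_i) / (max_i(α_i(x+1)+b_i) − min_i(α_i x + b_i))`.
If the `F`-orbit of `u = min(H_δ(K₀))` converges to `c`, then (i) the `δ`-normalizing sequence
`(d_n)` converges to `d = max_i(α_i(c+1)+b_i) − min_i(α_i c + b_i)`, and (ii) if
`d > max_i α_i` then `(H_δ^n(K₀))_n` converges to the attractor `L_d`, whose convex hull is
`[c, c+1]`. -/
theorem stmt18 {p : ℕ}
    (α : Fin (p + 1) → ℝ) (hα : ∀ i, 0 ≤ α i) (b : Fin (p + 1) → ℝ)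
    (f : Fin (p + 1) → ℝ → ℝ) (hf : ∀ i x, f i x = α i * x + b i)
    (F : ℝ → ℝ)
    (hF : ∀ x, F x = (Finset.univ.inf' Finset.univ_nonempty fun i => α i * x + b i) /
      ((Finset.univ.sup' Finset.univ_nonempty fun i => α i * (x + 1) + b i) -
        (Finset.univ.inf' Finset.univ_nonempty fun i => α i * x + b i)))
    (K₀ : Set ℝ) (hK₀c : IsCompact K₀) (hK₀ne : K₀.Nonempty)
    (hpos : ∀ n, 0 < Metric.diam (hutchR f ((hutchDiam f)^[n] K₀)))
    (c : ℝ)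
    (hc : Tendsto (fun n => F^[n] (sInf ((hutchDiam f)^[1] K₀))) atTop (𝓝 c)) :
    Tendsto (fun n => Metric.diam (hutchR f ((hutchDiam f)^[n] K₀))) atTop
      (𝓝 ((Finset.univ.sup' Finset.univ_nonempty fun i => α i * (c + 1) + b i) -
        (Finset.univ.inf' Finset.univ_nonempty fun i => α i * c + b i))) ∧
    ((Finset.univ.sup' Finset.univ_nonempty α <
        (Finset.univ.sup' Finset.univ_nonempty fun i => α i * (c + 1) + b i) -
          (Finset.univ.inf' Finset.univ_nonempty fun i => α i * c + b i)) →
      ∀ L : Set ℝ, IsCompact L → L.Nonempty →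
        ((Finset.univ.sup' Finset.univ_nonempty fun i => α i * (c + 1) + b i) -
          (Finset.univ.inf' Finset.univ_nonempty fun i => α i * c + b i))⁻¹ •
            hutchR f L = L →
        Tendsto (fun n => hausdorffDist ((hutchDiam f)^[n] K₀) L) atTop (𝓝 0) ∧
        convexHull ℝ L = Set.Icc c (c + 1)) := by
  -- abbreviations
  set m : ℝ → ℝ := (fun x => Finset.univ.inf' Finset.univ_nonempty fun i => α i * x + b i)
    with hm_def
  set M : ℝ → ℝ := (fun x => Finset.univ.sup' Finset.univ_nonempty fun i => α i * x + b i)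
    with hM_def
  set K : ℕ → Set ℝ := fun n => (hutchDiam f)^[n] K₀ with hK_def
  have hKsucc : ∀ n, K (n + 1) = (Metric.diam (hutchR f (K n)))⁻¹ • hutchR f (K n) := by
    intro n
    show (hutchDiam f)^[n + 1] K₀ = _
    rw [Function.iterate_succ_apply']
    rfl
  have hKc : ∀ n, IsCompact (K n) ∧ (K n).Nonempty := by
    intro n
    induction n with
    | zero => exact ⟨hK₀c, hK₀ne⟩
    | succ n ih =>
      rw [hKsucc]
      exact ⟨(hutchR_isCompact hf ih.1).smul _, (hutchR_nonempty f ih.2).smul_set⟩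
  have hHc : ∀ n, IsCompact (hutchR f (K n)) := fun n => hutchR_isCompact hf (hKc n).1
  have hHne : ∀ n, (hutchR f (K n)).Nonempty := fun n => hutchR_nonempty f (hKc n).2
  have hdform : ∀ n, Metric.diam (hutchR f (K n)) = M (sSup (K n)) - m (sInf (K n)) := by
    intro n
    exact hutchR_diam hα hf (hKc n).1 (hKc n).2
  have hdiam1 : ∀ n, Metric.diam (K (n + 1)) = 1 := by
    intro n
    rw [hKsucc, diam_smul_real (inv_nonneg.2 (hpos n).le) (hHc n) (hHne n),
      inv_mul_cancel₀ (hpos n).ne']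
  have hsup : ∀ n, sSup (K (n + 1)) = sInf (K (n + 1)) + 1 := by
    intro n
    have h1 := Real.diam_eq (hKc (n + 1)).1.isBounded
    rw [hdiam1 n] at h1
    linarith
  have hsInfsucc : ∀ n, sInf (K (n + 1)) =
      (Metric.diam (hutchR f (K n)))⁻¹ * m (sInf (K n)) := by
    intro n
    rw [hKsucc, Real.sInf_smul_of_nonneg (inv_nonneg.2 (hpos n).le), smul_eq_mul,
      (hutchR_isLeast hα hf (hKc n).1 (hKc n).2).csInf_eq]
  have hdform' : ∀ n, Metric.diam (hutchR f (K (n + 1))) =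
      M (sInf (K (n + 1)) + 1) - m (sInf (K (n + 1))) := by
    intro n
    rw [hdform (n + 1), hsup n]
  have hMshift : ∀ x : ℝ, M (x + 1) =
      Finset.univ.sup' Finset.univ_nonempty fun i => α i * (x + 1) + b i := fun x => rfl
  have hurec : ∀ n, sInf (K (n + 2)) = F (sInf (K (n + 1))) := by
    intro n
    rw [hsInfsucc (n + 1), hF, hdform' n, ← hMshift, div_eq_inv_mul]
  have hiter : ∀ n, sInf (K (n + 1)) = F^[n] (sInf (K 1)) := by
    intro n
    induction n with
    | zero => rfl
    | succ n ih => rw [Function.iterate_succ_apply', ← ih, hurec n]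
  have hu : Tendsto (fun n => sInf (K (n + 1))) atTop (𝓝 c) :=
    hc.congr (fun n => (hiter n).symm)
  -- continuity of m and M
  have hmc : Continuous m := by
    rw [hm_def]
    exact Continuous.finset_inf'_apply Finset.univ_nonempty
      (fun i _ => by fun_prop)
  have hMc : Continuous M := by
    rw [hM_def]
    exact Continuous.finset_sup'_apply Finset.univ_nonempty
      (fun i _ => by fun_prop)
  have hGcont : Continuous fun x => M (x + 1) - m x :=
    (hMc.comp (continuous_id.add continuous_const)).sub hmc
  -- part (i)
  have hdshift : Tendsto (fun n => Metric.diam (hutchR f (K (n + 1)))) atTop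
      (𝓝 (M (c + 1) - m c)) := by
    have h1 : Tendsto (fun n => M (sInf (K (n + 1)) + 1) - m (sInf (K (n + 1)))) atTop
        (𝓝 (M (c + 1) - m c)) := ((hGcont.tendsto c).comp hu)
    exact h1.congr (fun n => (hdform' n).symm)
  have hdt : Tendsto (fun n => Metric.diam (hutchR f (K n))) atTop
      (𝓝 (M (c + 1) - m c)) := by
    exact (tendsto_add_atTop_iff_nat
      (f := fun n => Metric.diam (hutchR f (K n))) 1).1 hdshift
  refine ⟨hdt, ?_⟩
  -- part (ii)
  intro hlt L hLc hLne hLfix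
  set A : ℝ := Finset.univ.sup' Finset.univ_nonempty α with hA_def
  set d : ℝ := M (c + 1) - m c with hd_def
  have hA0 : 0 ≤ A := le_trans (hα 0) (Finset.le_sup' α (Finset.mem_univ 0))
  have hd0 : 0 < d := lt_of_le_of_lt hA0 hlt
  have hr1 : A / d < 1 := (div_lt_one hd0).2 hlt
  have hr0 : 0 ≤ A / d := div_nonneg hA0 hd0.le
  -- F c = c
  have hFc : F c = c := by
    have hFfun : F = fun x => m x / (M (x + 1) - m x) := by
      funext x
      rw [hF x, hMshift x]
    have hcont : ContinuousAt F c := by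
      rw [hFfun]
      exact (hmc.continuousAt).div (hGcont.continuousAt) hd0.ne'
    have h1 : Tendsto (fun n => F (F^[n] (sInf ((hutchDiam f)^[1] K₀)))) atTop (𝓝 (F c)) :=
      (hcont.tendsto).comp hc
    have h2 : Tendsto (fun n => F (F^[n] (sInf ((hutchDiam f)^[1] K₀)))) atTop (𝓝 c) := by
      have h3 := hc.comp (tendsto_add_atTop_nat 1)
      exact h3.congr (fun n => by simp [Function.iterate_succ_apply'])
    exact tendsto_nhds_unique h1 h2
  have hmcd : m c = c * d := by
    have h1 := hF c
    rw [hFc, ← hMshift, ← hd_def] at h1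
    field_simp at h1
    rw [h1, hm_def]; simp only [mul_comm]
  have hMcd : M (c + 1) = (c + 1) * d := by
    have : d = M (c + 1) - m c := hd_def
    nlinarith [hmcd]
  -- contraction estimates
  have habs_m : ∀ x y : ℝ, |m x - m y| ≤ A * |x - y| := by
    intro x y
    refine aux_abs_inf'_sub _ _ (fun i => ?_)
    have h1 : (α i * x + b i) - (α i * y + b i) = α i * (x - y) := by ring
    rw [h1, abs_mul, abs_of_nonneg (hα i)]
    exact mul_le_mul_of_nonneg_right (Finset.le_sup' α (Finset.mem_univ i)) (abs_nonneg _)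
  have habs_M : ∀ x y : ℝ, |M x - M y| ≤ A * |x - y| := by
    intro x y
    refine aux_abs_sup'_sub _ _ (fun i => ?_)
    have h1 : (α i * x + b i) - (α i * y + b i) = α i * (x - y) := by ring
    rw [h1, abs_mul, abs_of_nonneg (hα i)]
    exact mul_le_mul_of_nonneg_right (Finset.le_sup' α (Finset.mem_univ i)) (abs_nonneg _)
  -- endpoints of L
  have hinfL : sInf L = d⁻¹ * m (sInf L) := by
    conv_lhs => rw [← hLfix]
    rw [Real.sInf_smul_of_nonneg (inv_nonneg.2 hd0.le), smul_eq_mul,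
      (hutchR_isLeast hα hf hLc hLne).csInf_eq]
  have hsupL : sSup L = d⁻¹ * M (sSup L) := by
    conv_lhs => rw [← hLfix]
    rw [Real.sSup_smul_of_nonneg (inv_nonneg.2 hd0.le), smul_eq_mul,
      (hutchR_isGreatest hα hf hLc hLne).csSup_eq]
  have hinfLc : sInf L = c := by
    have h1 : |sInf L - c| ≤ A / d * |sInf L - c| := by
      have h2 : sInf L - c = d⁻¹ * (m (sInf L) - m c) := by
        rw [mul_sub, ← hinfL, hmcd]
        field_simp
      calc |sInf L - c| = d⁻¹ * |m (sInf L) - m c| := by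
            rw [h2, abs_mul, abs_of_nonneg (inv_nonneg.2 hd0.le)]
      _ ≤ d⁻¹ * (A * |sInf L - c|) :=
            mul_le_mul_of_nonneg_left (habs_m _ _) (inv_nonneg.2 hd0.le)
      _ = A / d * |sInf L - c| := by field_simp
    by_contra hne
    have habs : 0 < |sInf L - c| := abs_pos.2 (sub_ne_zero.2 hne)
    have h9 := mul_lt_mul_of_pos_right hr1 habs
    linarith
  have hsupLc : sSup L = c + 1 := by
    have h1 : |sSup L - (c + 1)| ≤ A / d * |sSup L - (c + 1)| := by
      have h2 : sSup L - (c + 1) = d⁻¹ * (M (sSup L) - M (c + 1)) := by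
        rw [mul_sub, ← hsupL, hMcd]
        field_simp
      calc |sSup L - (c + 1)| = d⁻¹ * |M (sSup L) - M (c + 1)| := by
            rw [h2, abs_mul, abs_of_nonneg (inv_nonneg.2 hd0.le)]
      _ ≤ d⁻¹ * (A * |sSup L - (c + 1)|) :=
            mul_le_mul_of_nonneg_left (habs_M _ _) (inv_nonneg.2 hd0.le)
      _ = A / d * |sSup L - (c + 1)| := by field_simp
    by_contra hne
    have habs : 0 < |sSup L - (c + 1)| := abs_pos.2 (sub_ne_zero.2 hne)
    have h9 := mul_lt_mul_of_pos_right hr1 habs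
    linarith
  -- convex hull
  have hhull : convexHull ℝ L = Set.Icc c (c + 1) := by
    rw [← hsupLc, ← hinfLc]
    apply subset_antisymm
    · exact convexHull_min
        (fun x hx => ⟨csInf_le hLc.bddBelow hx, le_csSup hLc.bddAbove hx⟩) (convex_Icc _ _)
    · rw [← segment_eq_Icc (csInf_le_csSup hLne hLc.bddBelow hLc.bddAbove)]
      exact (convex_convexHull ℝ L).segment_subset
        (subset_convexHull ℝ L (hLc.sInf_mem hLne))
        (subset_convexHull ℝ L (hLc.sSup_mem hLne))
  refine ⟨?_, hhull⟩
  -- Hausdorff convergence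
  -- uniform bound on H (K (n+1))
  obtain ⟨Ra, hRa⟩ := hu.bddAbove_range
  obtain ⟨Rb, hRb⟩ := hu.bddBelow_range
  set R : ℝ := max Ra (-Rb) with hR_def
  have hRbound : ∀ n, |sInf (K (n + 1))| ≤ R := by
    intro n
    have h1 : sInf (K (n + 1)) ≤ Ra := hRa ⟨n, rfl⟩
    have h2 : Rb ≤ sInf (K (n + 1)) := hRb ⟨n, rfl⟩
    rw [abs_le]
    constructor
    · have := le_max_right Ra (-Rb); simp only [hR_def]; linarith
    · have := le_max_left Ra (-Rb); simp only [hR_def]; linarith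
  set Bb : ℝ := Finset.univ.sup' Finset.univ_nonempty fun i => |b i| with hBb_def
  set C : ℝ := A * (R + 1) + Bb with hC_def
  have hC : ∀ n, ∀ x ∈ hutchR f (K (n + 1)), |x| ≤ C := by
    intro n x hx
    obtain ⟨i, hx⟩ := Set.mem_iUnion.1 hx
    obtain ⟨y, hy, rfl⟩ := hx
    have hy1 : sInf (K (n + 1)) ≤ y := csInf_le (hKc (n + 1)).1.bddBelow hy
    have hy2 : y ≤ sSup (K (n + 1)) := le_csSup (hKc (n + 1)).1.bddAbove hy
    have hy3 : |y| ≤ R + 1 := by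
      have h4 := hRbound n
      have h5 := hsup n
      rw [abs_le] at h4 ⊢
      constructor <;> [linarith; linarith [h5 ▸ hy2]]
    have h6 : |f i y| ≤ α i * |y| + |b i| := by
      rw [hf]
      exact (abs_add_le _ _).trans (by rw [abs_mul, abs_of_nonneg (hα i)])
    have h7 : α i * |y| ≤ A * (R + 1) := by
      have := Finset.le_sup' α (Finset.mem_univ i)
      nlinarith [abs_nonneg y]
    have h8 : |b i| ≤ Bb := Finset.le_sup' (fun i => |b i|) (Finset.mem_univ i)
    rw [hC_def]
    linarith
  have hC0 : 0 ≤ C := le_trans (abs_nonneg _) (hC 0 _ (hHne 1).some_mem)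
  -- the contracted maps
  set f' : Fin (p + 1) → ℝ → ℝ := fun i x => d⁻¹ * f i x with hf'_def
  have hf' : ∀ i x, f' i x = (d⁻¹ * α i) * x + d⁻¹ * b i := by
    intro i x
    rw [hf'_def]
    simp only [hf]
    ring
  have hsmul_hutch : ∀ S : Set ℝ, d⁻¹ • hutchR f S = hutchR f' S := by
    intro S
    simp only [hutchR, Set.smul_set_iUnion]
    refine Set.iUnion_congr fun i => ?_
    rw [← Set.image_smul, ← Set.image_comp]
    rfl
  have hlip : ∀ i x y, dist (f' i x) (f' i y) = d⁻¹ * α i * dist x y := by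
    intro i x y
    rw [Real.dist_eq, Real.dist_eq, hf' i x, hf' i y]
    have : (d⁻¹ * α i * x + d⁻¹ * b i) - (d⁻¹ * α i * y + d⁻¹ * b i)
        = (d⁻¹ * α i) * (x - y) := by ring
    rw [this, abs_mul, abs_of_nonneg (mul_nonneg (inv_nonneg.2 hd0.le) (hα i))]
  have hlip' : ∀ i x y, dist (f' i x) (f' i y) ≤ (A / d) * dist x y := by
    intro i x y
    rw [hlip]
    refine mul_le_mul_of_nonneg_right ?_ dist_nonneg
    rw [div_eq_inv_mul]
    exact mul_le_mul_of_nonneg_left (Finset.le_sup' α (Finset.mem_univ i)) (inv_nonneg.2 hd0.le)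
  have hLfix' : hutchR f' L = L := by rw [← hsmul_hutch]; exact hLfix
  -- error terms
  set e : ℕ → ℝ := fun n => hausdorffDist (K (n + 1)) L with he_def
  set eps : ℕ → ℝ := fun n =>
    |(Metric.diam (hutchR f (K (n + 1))))⁻¹ - d⁻¹| * C with heps_def
  have hmidc : ∀ n, IsCompact (hutchR f' (K (n + 1))) :=
    fun n => hutchR_isCompact hf' (hKc (n + 1)).1
  have hmidne : ∀ n, (hutchR f' (K (n + 1))).Nonempty :=
    fun n => hutchR_nonempty f' (hKc (n + 1)).2
  have hrec : ∀ n, e (n + 1) ≤ (A / d) * e n + eps n := by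
    intro n
    have htri : hausdorffDist (K (n + 2)) L ≤
        hausdorffDist (K (n + 2)) (hutchR f' (K (n + 1))) +
        hausdorffDist (hutchR f' (K (n + 1))) L := by
      apply hausdorffDist_triangle
      apply hausdorffEdist_ne_top_of_nonempty_of_bounded (hKc (n + 2)).2 (hmidne n)
        (hKc (n + 2)).1.isBounded (hmidc n).isBounded
    have h1 : hausdorffDist (K (n + 2)) (hutchR f' (K (n + 1))) ≤ eps n := by
      have h2 : hutchR f' (K (n + 1)) = d⁻¹ • hutchR f (K (n + 1)) :=
        (hsmul_hutch _).symm
      rw [hKsucc (n + 1), h2]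
      exact haus_smul_le (hHne (n + 1)) (hC n)
    have h3 : hausdorffDist (hutchR f' (K (n + 1))) L ≤ (A / d) * e n := by
      conv_lhs => rw [← hLfix']
      exact haus_hutch_le hr0 hlip' (hKc (n + 1)).1 (hKc (n + 1)).2 hLc hLne
    calc e (n + 1) ≤ hausdorffDist (K (n + 2)) (hutchR f' (K (n + 1))) +
        hausdorffDist (hutchR f' (K (n + 1))) L := htri
    _ ≤ eps n + (A / d) * e n := add_le_add h1 h3
    _ = (A / d) * e n + eps n := by ring
  have heps : Tendsto eps atTop (𝓝 0) := by
    have h1 : Tendsto (fun n => Metric.diam (hutchR f (K (n + 1)))) atTop (𝓝 d) := hdshift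
    have h2 := (((h1.inv₀ hd0.ne').sub_const d⁻¹).abs).mul_const C
    simpa using h2
  have hfinal : Tendsto e atTop (𝓝 0) :=
    aux_tendsto_zero hr0 hr1 (fun n => hausdorffDist_nonneg) hrec heps
  exact (tendsto_add_atTop_iff_nat
    (f := fun n => hausdorffDist (K n) L) 1).1 hfinal
end
end
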